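/- arXiv:1509.03189 — 6 statements merged into one kernel-verified Lean document; each statement's English description precedes it below -/
import Mathlib

section
/- Let u be a nonprincipal ultrafilter on ℕ and let (X_n, B_n, μ_n) be a sequence of probability spaces. For every countable family {B_n^i ∈ B_n}_{i,n∈ℕ} there is a family {C_n ∈ B_n}_{n∈ℕ} such that ⋃_{i∈ℕ} [B_n^i]_u ⊆ [C_n]_u and lim_u μ_n(C_n) = lim_{i→∞} lim_u μ_n(B_n^1 ∪ … ∪ B_n^i). -/
open MeasureTheory Filter Topology
open scoped ENNReal symmDiff



/-! Ultraproducts of sets and the Loeb outer measure. -/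

/-- The equivalence relation on `∀ n, X n` identifying sequences that agree
`u`-almost everywhere. -/
def uRel (u : Ultrafilter ℕ) {X : ℕ → Type*} (x y : ∀ n, X n) : Prop :=
  ∀ᶠ n in (u : Filter ℕ), x n = y n

/-- The (set-theoretic) ultraproduct of the family `X n` with respect to the
ultrafilter `u`: the quotient of `∀ n, X n` by the relation identifying sequences
which agree `u`-almost everywhere. -/
def UProd (u : Ultrafilter ℕ) (X : ℕ → Type*) : Type _ :=
  Quot (uRel u (X := X))

/-- The class `[x_n]_u` of a sequence in the ultraproduct. -/
def uMk (u : Ultrafilter ℕ) {X : ℕ → Type*} (x : ∀ n, X n) : UProd u X :=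
  Quot.mk _ x

/-- The subset `[A_n]_u` of the ultraproduct determined by a sequence of subsets
`A n ⊆ X n`: the set of classes of sequences which belong to `A n` for `u`-almost
every `n`. -/
def uSet (u : Ultrafilter ℕ) {X : ℕ → Type*} (A : ∀ n, Set (X n)) : Set (UProd u X) :=
  {z | ∃ x : ∀ n, X n, uMk u x = z ∧ ∀ᶠ n in (u : Filter ℕ), x n ∈ A n}

/-- The limit of a sequence of extended nonnegative reals along the ultrafilter `u`
(it always exists since `ℝ≥0∞` is a compact Hausdorff space). -/
noncomputable def ulim (u : Ultrafilter ℕ) (f : ℕ → ℝ≥0∞) : ℝ≥0∞ :=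
  (u.map f).lim

/-- The Loeb outer measure `θ` on the ultraproduct: the infimum, over countable
covers of `A` by sets of the form `[B^i_n]_u` with all `B^i_n` measurable, of
`∑ᵢ lim_u μ_n (B^i_n)`. -/
noncomputable def loebOuter (u : Ultrafilter ℕ) {X : ℕ → Type*}
    [∀ n, MeasurableSpace (X n)] (μ : ∀ n, Measure (X n)) (A : Set (UProd u X)) : ℝ≥0∞ :=
  ⨅ (B : ℕ → ∀ n, Set (X n)) (_ : (∀ i n, MeasurableSet (B i n)) ∧
      A ⊆ ⋃ i, uSet u (B i)), ∑' i, ulim u fun n => μ n (B i n)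

/-- Carathéodory measurability with respect to the Loeb outer measure. -/
def LoebMeasurable (u : Ultrafilter ℕ) {X : ℕ → Type*}
    [∀ n, MeasurableSpace (X n)] (μ : ∀ n, Measure (X n)) (A : Set (UProd u X)) : Prop :=
  ∀ S : Set (UProd u X), loebOuter u μ (S ∩ A) + loebOuter u μ (S \ A) ≤ loebOuter u μ S

/-- The map on the ultraproduct induced by a sequence of maps `g n : X n → X n`. -/
def uMap (u : Ultrafilter ℕ) {X : ℕ → Type*} (g : ∀ n, X n → X n) :
    UProd u X → UProd u X :=
  Quot.lift (fun x => uMk u fun n => g n (x n))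
    (fun x y h => Quot.sound (h.mono fun n hn => by simpa using congrArg (g n) hn))

section Aux

open Filter

lemma ulim_tendsto (u : Ultrafilter ℕ) (f : ℕ → ℝ≥0∞) :
    Filter.Tendsto f (u : Filter ℕ) (nhds (ulim u f)) :=
  (u.map f).le_nhds_lim

lemma ulim_le (u : Ultrafilter ℕ) {f g : ℕ → ℝ≥0∞}
    (h : ∀ᶠ n in (u : Filter ℕ), f n ≤ g n) : ulim u f ≤ ulim u g :=
  le_of_tendsto_of_tendsto (ulim_tendsto u f) (ulim_tendsto u g) h

lemma ulim_le_const (u : Ultrafilter ℕ) {f : ℕ → ℝ≥0∞} {c : ℝ≥0∞}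
    (h : ∀ᶠ n in (u : Filter ℕ), f n ≤ c) : ulim u f ≤ c :=
  le_of_tendsto (ulim_tendsto u f) h

end Aux

/-- For every countable family `{B i n}` of measurable sets there is a
single sequence `{C n}` of measurable sets with `⋃ i [B i]_u ⊆ [C]_u` and
`lim_u μ_n (C n) = lim_{i → ∞} lim_u μ_n (B 0 n ∪ … ∪ B i n)`. -/
theorem loeb_countable_cover (u : Ultrafilter ℕ) (hu : (u : Filter ℕ) ≤ Filter.cofinite)
    {X : ℕ → Type*} [∀ n, MeasurableSpace (X n)]
    (μ : ∀ n, Measure (X n)) [∀ n, IsProbabilityMeasure (μ n)]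
    (B : ℕ → ∀ n, Set (X n)) (hB : ∀ i n, MeasurableSet (B i n)) :
    ∃ C : ∀ n, Set (X n), (∀ n, MeasurableSet (C n)) ∧
      (⋃ i, uSet u (B i)) ⊆ uSet u C ∧
      Filter.Tendsto (fun i => ulim u fun n => μ n (⋃ j ∈ Finset.range (i + 1), B j n))
        Filter.atTop (nhds (ulim u fun n => μ n (C n))) := by
  classical
  -- finite unions
  set D : ℕ → ∀ n, Set (X n) := fun i n => ⋃ j ∈ Finset.range (i + 1), B j n with hD
  set a : ℕ → ℝ≥0∞ := fun i => ulim u fun n => μ n (D i n) with ha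
  have hDmono : ∀ i i' n, i ≤ i' → D i n ⊆ D i' n := by
    intro i i' n h
    refine Set.iUnion₂_subset fun j hj => ?_
    have hji := Finset.mem_range.1 hj
    show B j n ⊆ ⋃ k ∈ Finset.range (i' + 1), B k n
    have hj' : j ∈ Finset.range (i' + 1) :=
      Finset.mem_range.2 (Nat.lt_succ_of_le (le_trans (Nat.lt_succ_iff.1 hji) h))
    exact Set.subset_iUnion₂ (s := fun k _ => B k n) j hj'
  have hamono : Monotone a := by
    intro i i' h
    exact ulim_le u (Filter.Eventually.of_forall fun n => measure_mono (hDmono i i' n h))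
  have hale : ∀ i, a i ≤ 1 := fun i =>
    ulim_le_const u (Filter.Eventually.of_forall fun n => prob_le_one)
  set L : ℝ≥0∞ := ⨆ i, a i with hL
  have hLle : L ≤ 1 := iSup_le hale
  have haL : ∀ i, a i ≤ L := le_iSup a
  have htendL : Filter.Tendsto a Filter.atTop (nhds L) := tendsto_atTop_iSup hamono
  set ε : ℕ → ℝ≥0∞ := fun i => 2⁻¹ ^ i with hε
  have hεpos : ∀ i, 0 < ε i := fun i => ENNReal.pow_pos (by norm_num) i
  set S : ℕ → Set ℕ := fun i => {n | μ n (D i n) < a i + ε i} with hS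
  have hSmem : ∀ i, S i ∈ u := by
    intro i
    have hlt : a i < a i + ε i :=
      ENNReal.lt_add_right (lt_of_le_of_lt (hale i) ENNReal.one_lt_top).ne (hεpos i).ne'
    exact (ulim_tendsto u fun n => μ n (D i n)) (Iio_mem_nhds hlt)
  set P : ℕ → ℕ → Prop := fun n i => ∀ j ≤ i, n ∈ S j with hP
  set f : ℕ → ℕ := fun n => Nat.findGreatest (P n) n with hf
  have hbig : ∀ i, ∀ᶠ n in (u : Filter ℕ), i ≤ n := by
    intro i
    refine Filter.Eventually.filter_mono hu ?_
    rw [Filter.eventually_cofinite]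
    simpa only [not_le] using Set.finite_lt_nat i
  have hfge : ∀ i, ∀ᶠ n in (u : Filter ℕ), i ≤ f n := by
    intro i
    have h1 : ∀ᶠ n in (u : Filter ℕ), ∀ j ∈ Finset.Iic i, n ∈ S j :=
      (Filter.eventually_all_finset _).2 fun j _ => hSmem j
    filter_upwards [h1, hbig i] with n hn1 hn2
    exact Nat.le_findGreatest hn2 fun j hj => hn1 j (Finset.mem_Iic.2 hj)
  -- the candidate
  refine ⟨fun n => D (f n) n, fun n => ?_, ?_, ?_⟩
  · exact Finset.measurableSet_biUnion _ fun j _ => hB j n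
  · rintro z ⟨_, ⟨i, rfl⟩, x, hx, hxB⟩
    refine ⟨x, hx, ?_⟩
    filter_upwards [hxB, hfge i] with n hn1 hn2
    exact hDmono i (f n) n hn2 (Set.mem_biUnion (Finset.self_mem_range_succ i) hn1)
  · -- lim_u μ (C n) = L
    have key : (ulim u fun n => μ n (D (f n) n)) = L := by
      refine le_antisymm ?_ ?_
      · -- upper bound
        refine ENNReal.le_of_forall_pos_le_add fun δ hδ _ => ?_
        obtain ⟨i, hi⟩ := ENNReal.exists_inv_two_pow_lt (a := (δ : ℝ≥0∞))
          (by exact_mod_cast hδ.ne')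
        refine ulim_le_const u ?_
        filter_upwards [hfge (i + 1)] with n hn1
        have hfpos : 0 < f n := lt_of_lt_of_le (Nat.succ_pos i) hn1
        obtain ⟨m, _, hmn, hPm⟩ := Nat.findGreatest_pos.1 hfpos
        have hPfn : P n (f n) := Nat.findGreatest_spec (P := P n) hmn hPm
        have hSfn : n ∈ S (f n) := hPfn (f n) le_rfl
        have hεle : ε (f n) ≤ (δ : ℝ≥0∞) := by
          refine le_trans ?_ hi.le
          exact pow_le_pow_right_of_le_one' (by norm_num : (2⁻¹:ℝ≥0∞) ≤ 1) (le_trans (Nat.le_succ i) hn1)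
        exact le_trans hSfn.le (add_le_add (haL (f n)) hεle)
      · refine iSup_le fun i => ?_
        refine ulim_le u ?_
        filter_upwards [hfge i] with n hn
        exact measure_mono (hDmono i (f n) n hn)
    rw [key]
    exact htendL
end

section
/- Let u be a nonprincipal ultrafilter on ℕ, let (X_n, B_n, μ_n) be a sequence of probability spaces, and for each n let g_n be a measure-preserving bijection of (X_n, μ_n). Then the map T : X_u → X_u defined by T([x_n]_u) := [g_n x_n]_u is a well-defined measure-preserving bijection of the Loeb measure space (X_u, B_u, μ_u); moreover, if (h_n) is another such sequence with induced map S, then δ_u(T, S) := μ_u({z ∈ X_u : T z ≠ S z}) = lim_u μ_n({x ∈ X_n : g_n x ≠ h_n x}). Consequently the metric ultraproduct of the groups of measure-preserving automorphisms of (X_n, μ_n), each with the uniform metric δ(R,Q) = μ({x : Rx ≠ Qx}), embeds isometrically into the group of measure-preserving automorphisms of (X_u, μ_u) with its uniform metric. -/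
open MeasureTheory Filter Topology
open scoped ENNReal symmDiff



namespace LoebAux

variable (u : Ultrafilter ℕ) {X : ℕ → Type*}

theorem uRel_equiv : Equivalence (uRel u (X := X)) :=
  ⟨fun _ => Eventually.of_forall fun _ => rfl,
   fun h => h.mono fun _ e => e.symm,
   fun h1 h2 => h2.mp (h1.mono fun _ e1 e2 => e1.trans e2)⟩

theorem uMk_eq_iff {x y : ∀ n, X n} : uMk u x = uMk u y ↔ uRel u x y :=
  ⟨fun h => ((uRel_equiv u).eqvGen_iff).mp (Quot.eqvGen_exact h), Quot.sound⟩

theorem mem_uSet_iff {A : ∀ n, Set (X n)} {x : ∀ n, X n} :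
    uMk u x ∈ uSet u A ↔ ∀ᶠ n in (u : Filter ℕ), x n ∈ A n := by
  constructor
  · rintro ⟨y, hy, hmem⟩
    have hr : uRel u y x := (uMk_eq_iff u).mp hy
    exact hmem.mp (hr.mono fun n e hn => e ▸ hn)
  · exact fun hx => ⟨x, rfl, hx⟩

theorem uSet_univ : uSet u (fun n => (Set.univ : Set (X n))) = Set.univ := by
  ext z
  obtain ⟨x, rfl⟩ := Quot.exists_rep z
  simp [show Quot.mk _ x = uMk u x from rfl, mem_uSet_iff]

theorem uSet_inter_subset (A B : ∀ n, Set (X n)) :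
    uSet u A ∩ uSet u B ⊆ uSet u fun n => A n ∩ B n := by
  rintro z ⟨hA, hB⟩
  obtain ⟨x, rfl⟩ := Quot.exists_rep z
  rw [show Quot.mk _ x = uMk u x from rfl, mem_uSet_iff] at *
  exact hA.and hB

theorem diff_uSet_subset (A B : ∀ n, Set (X n)) :
    uSet u A \ uSet u B ⊆ uSet u fun n => A n \ B n := by
  rintro z ⟨hA, hB⟩
  obtain ⟨x, rfl⟩ := Quot.exists_rep z
  rw [show Quot.mk _ x = uMk u x from rfl, mem_uSet_iff] at *
  exact hA.and (Ultrafilter.eventually_not.2 hB)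

theorem tendsto_ulim (f : ℕ → ℝ≥0∞) : Tendsto f (u : Filter ℕ) (𝓝 (ulim u f)) := by
  rw [Tendsto, ← Ultrafilter.coe_map]
  exact (u.map f).le_nhds_lim

theorem ulim_eq {f : ℕ → ℝ≥0∞} {a : ℝ≥0∞} (h : Tendsto f (u : Filter ℕ) (𝓝 a)) :
    ulim u f = a :=
  tendsto_nhds_unique (tendsto_ulim u f) h

theorem ulim_const (a : ℝ≥0∞) : ulim u (fun _ => a) = a :=
  ulim_eq u tendsto_const_nhds

theorem ulim_add (f g : ℕ → ℝ≥0∞) :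
    ulim u (fun n => f n + g n) = ulim u f + ulim u g :=
  ulim_eq u ((tendsto_ulim u f).add (tendsto_ulim u g))

theorem ulim_mono {f g : ℕ → ℝ≥0∞} (h : ∀ n, f n ≤ g n) : ulim u f ≤ ulim u g :=
  le_of_tendsto_of_tendsto' (tendsto_ulim u f) (tendsto_ulim u g) h

theorem ulim_finset_sum {ι : Type*} (s : Finset ι) (f : ι → ℕ → ℝ≥0∞) :
    ulim u (fun n => ∑ i ∈ s, f i n) = ∑ i ∈ s, ulim u (f i) :=
  ulim_eq u (tendsto_finset_sum s fun i _ => tendsto_ulim u (f i))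

end LoebAux

namespace LoebAux

section Meas

variable (u : Ultrafilter ℕ) {X : ℕ → Type*} [∀ n, MeasurableSpace (X n)]
  (μ : ∀ n, Measure (X n)) [∀ n, IsProbabilityMeasure (μ n)]

theorem ulim_meas_le_one (A : ∀ n, Set (X n)) : (ulim u fun n => μ n (A n)) ≤ 1 :=
  (ulim_mono u fun n => prob_le_one).trans_eq (ulim_const u 1)

theorem loebOuter_le_cover {B : ℕ → ∀ n, Set (X n)} {A : Set (UProd u X)}
    (hB : ∀ i n, MeasurableSet (B i n)) (hc : A ⊆ ⋃ i, uSet u (B i)) :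
    loebOuter u μ A ≤ ∑' i, ulim u fun n => μ n (B i n) :=
  iInf₂_le B ⟨hB, hc⟩

theorem loebOuter_mono {A A' : Set (UProd u X)} (h : A ⊆ A') :
    loebOuter u μ A ≤ loebOuter u μ A' :=
  le_iInf₂ fun B hB => loebOuter_le_cover u μ hB.1 (h.trans hB.2)

theorem loebOuter_le_uSet {E : ∀ n, Set (X n)} (hE : ∀ n, MeasurableSet (E n))
    {A : Set (UProd u X)} (hA : A ⊆ uSet u E) :
    loebOuter u μ A ≤ ulim u fun n => μ n (E n) := by
  have hc : A ⊆ ⋃ i, uSet u (if i = 0 then E else fun _ => ∅) := by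
    refine hA.trans ?_
    exact (Set.subset_iUnion
      (fun i => uSet u (if i = 0 then E else fun _ => (∅ : Set (X _)))) 0).trans_eq'
      (by simp)
  refine (loebOuter_le_cover u μ (fun i n => by split <;> simp [hE n]) hc).trans_eq ?_
  refine (tsum_eq_single 0 fun i hi => ?_).trans (by simp)
  simp only [if_neg hi]
  simpa using ulim_const u 0

theorem loebOuter_le_one (A : Set (UProd u X)) : loebOuter u μ A ≤ 1 := by
  refine (loebOuter_le_uSet u μ (fun n => MeasurableSet.univ)
    (A := A) ?_).trans (ulim_meas_le_one u μ _)
  rw [uSet_univ]; exact Set.subset_univ _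

noncomputable def premeasure (A : Set (UProd u X)) : ℝ≥0∞ :=
  ⨅ (B : ∀ n, Set (X n)) (_ : (∀ n, MeasurableSet (B n)) ∧ A ⊆ uSet u B),
    ulim u fun n => μ n (B n)

theorem premeasure_le_one (A : Set (UProd u X)) : premeasure u μ A ≤ 1 := by
  refine (iInf₂_le (fun n => Set.univ) ⟨fun n => MeasurableSet.univ, ?_⟩).trans
    (ulim_meas_le_one u μ _)
  rw [uSet_univ]; exact Set.subset_univ _

theorem premeasure_empty : premeasure u μ (∅ : Set (UProd u X)) = 0 := by
  refine le_antisymm ?_ zero_le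
  refine (iInf₂_le (fun n => ∅) ⟨fun n => MeasurableSet.empty, Set.empty_subset _⟩).trans ?_
  simpa using (ulim_const u 0).le

noncomputable def loebOM : OuterMeasure (UProd u X) :=
  OuterMeasure.ofFunction (premeasure u μ) (premeasure_empty u μ)

theorem loebOuter_le_tsum_premeasure {A : Set (UProd u X)} (f : ℕ → Set (UProd u X))
    (hf : A ⊆ ⋃ i, f i) : loebOuter u μ A ≤ ∑' i, premeasure u μ (f i) := by
  refine ENNReal.le_of_forall_pos_le_add fun ε hε _ => ?_
  obtain ⟨δ, hδpos, hδ⟩ := ENNReal.exists_pos_sum_of_countable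
    (ε := (ε : ℝ≥0∞)) (by exact_mod_cast hε.ne') ℕ
  have key : ∀ i, ∃ B : ∀ n, Set (X n), (∀ n, MeasurableSet (B n)) ∧ f i ⊆ uSet u B ∧
      (ulim u fun n => μ n (B n)) ≤ premeasure u μ (f i) + δ i := by
    intro i
    have hlt : premeasure u μ (f i) < premeasure u μ (f i) + δ i :=
      ENNReal.lt_add_right ((premeasure_le_one u μ _).trans_lt (by norm_num)).ne
        (by exact_mod_cast (hδpos i).ne')
    rw [premeasure] at hlt
    rw [iInf_lt_iff] at hlt
    obtain ⟨B, hB⟩ := hlt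
    rw [iInf_lt_iff] at hB
    obtain ⟨⟨h1, h2⟩, h3⟩ := hB
    exact ⟨B, h1, h2, h3.le⟩
  choose B hBm hBc hBle using key
  have hcov : A ⊆ ⋃ i, uSet u (B i) :=
    hf.trans (Set.iUnion_mono fun i => hBc i)
  calc loebOuter u μ A ≤ ∑' i, ulim u fun n => μ n (B i n) :=
        loebOuter_le_cover u μ hBm hcov
    _ ≤ ∑' i, (premeasure u μ (f i) + δ i) := ENNReal.tsum_le_tsum hBle
    _ = ∑' i, premeasure u μ (f i) + ∑' i, (δ i : ℝ≥0∞) := ENNReal.tsum_add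
    _ ≤ ∑' i, premeasure u μ (f i) + ε := add_le_add_right hδ.le _

theorem loebOuter_eq : loebOuter u μ = ⇑(loebOM u μ) := by
  funext A
  refine le_antisymm ?_ ?_
  · rw [loebOM, OuterMeasure.ofFunction_apply]
    exact le_iInf₂ fun f hf => loebOuter_le_tsum_premeasure u μ f hf
  · refine le_iInf₂ fun B hB => ?_
    rw [loebOM, OuterMeasure.ofFunction_apply]
    refine (iInf₂_le (fun i => uSet u (B i)) hB.2).trans ?_
    refine ENNReal.tsum_le_tsum fun i => ?_
    exact iInf₂_le (B i) ⟨hB.1 i, subset_rfl⟩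

theorem loebMeasurable_iff (A : Set (UProd u X)) :
    LoebMeasurable u μ A ↔ MeasurableSet[(loebOM u μ).caratheodory] A := by
  rw [OuterMeasure.isCaratheodory_iff_le]
  unfold LoebMeasurable
  rw [loebOuter_eq u μ]

end Meas

end LoebAux

namespace LoebAux

section Meas2

variable (u : Ultrafilter ℕ) {X : ℕ → Type*} [∀ n, MeasurableSpace (X n)]
  (μ : ∀ n, Measure (X n)) [∀ n, IsProbabilityMeasure (μ n)]

theorem uSet_loebMeasurable {E : ∀ n, Set (X n)} (hE : ∀ n, MeasurableSet (E n)) :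
    LoebMeasurable u μ (uSet u E) := by
  intro S
  refine le_iInf₂ fun C hC => ?_
  obtain ⟨hCm, hCc⟩ := hC
  have h1 : loebOuter u μ (S ∩ uSet u E) ≤ ∑' i, ulim u fun n => μ n (C i n ∩ E n) := by
    refine loebOuter_le_cover u μ (fun i n => (hCm i n).inter (hE n)) ?_
    rintro z ⟨hzS, hzE⟩
    obtain ⟨i, hzi⟩ := Set.mem_iUnion.1 (hCc hzS)
    exact Set.mem_iUnion.2 ⟨i, uSet_inter_subset u (C i) E ⟨hzi, hzE⟩⟩
  have h2 : loebOuter u μ (S \ uSet u E) ≤ ∑' i, ulim u fun n => μ n (C i n \ E n) := by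
    refine loebOuter_le_cover u μ (fun i n => (hCm i n).diff (hE n)) ?_
    rintro z ⟨hzS, hzE⟩
    obtain ⟨i, hzi⟩ := Set.mem_iUnion.1 (hCc hzS)
    exact Set.mem_iUnion.2 ⟨i, diff_uSet_subset u (C i) E ⟨hzi, hzE⟩⟩
  calc loebOuter u μ (S ∩ uSet u E) + loebOuter u μ (S \ uSet u E)
      ≤ (∑' i, ulim u fun n => μ n (C i n ∩ E n)) +
        ∑' i, ulim u fun n => μ n (C i n \ E n) := add_le_add h1 h2
    _ = ∑' i, ((ulim u fun n => μ n (C i n ∩ E n)) +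
        ulim u fun n => μ n (C i n \ E n)) := ENNReal.tsum_add.symm
    _ = ∑' i, ulim u fun n => μ n (C i n) := by
        refine tsum_congr fun i => ?_
        rw [← ulim_add]
        congr 1
        funext n
        exact measure_inter_add_diff (C i n) (hE n)

/-- The saturation / countable-compactness lemma. -/
theorem sat (hu : (u : Filter ℕ) ≤ Filter.cofinite)
    {E : ∀ n, Set (X n)} (hE : ∀ n, MeasurableSet (E n))
    {B : ℕ → ∀ n, Set (X n)} (hBm : ∀ i n, MeasurableSet (B i n))
    (hBc : uSet u E ⊆ ⋃ i, uSet u (B i)) :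
    (ulim u fun n => μ n (E n)) ≤ ∑' i, ulim u fun n => μ n (B i n) := by
  classical
  by_contra hlt
  push_neg at hlt
  set s := ∑' i, ulim u fun n => μ n (B i n) with hs
  set t := ulim u fun n => μ n (E n) with ht
  have hXne : ∀ n, Nonempty (X n) := fun n => by
    rw [Set.nonempty_iff_univ_nonempty]
    exact nonempty_of_measure_ne_zero (μ := μ n)
      (by simp [measure_univ] : μ n Set.univ ≠ 0)
  set C : ℕ → ∀ n, Set (X n) := fun k n => ⋃ i ∈ Finset.range k, B i n with hC
  have hkey : ∀ k, 0 < ulim u fun n => μ n (E n \ C k n) := by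
    intro k
    have h1 : ∀ n, μ n (E n) ≤ μ n (E n \ C k n) + ∑ i ∈ Finset.range k, μ n (B i n) := by
      intro n
      calc μ n (E n) ≤ μ n ((E n \ C k n) ∪ C k n) :=
            measure_mono (by intro a ha; by_cases h : a ∈ C k n <;> simp [h, ha])
        _ ≤ μ n (E n \ C k n) + μ n (C k n) := measure_union_le _ _
        _ ≤ μ n (E n \ C k n) + ∑ i ∈ Finset.range k, μ n (B i n) := by
            gcongr
            exact measure_biUnion_finset_le _ _
    have h2 : t ≤ (ulim u fun n => μ n (E n \ C k n)) + ∑ i ∈ Finset.range k,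
        ulim u fun n => μ n (B i n) := by
      refine (ulim_mono u h1).trans_eq ?_
      rw [ulim_add, ulim_finset_sum]
    rcases eq_zero_or_pos (ulim u fun n => μ n (E n \ C k n)) with h0 | h0
    · rw [h0, zero_add] at h2
      exact absurd (h2.trans (ENNReal.sum_le_tsum _)) hlt.not_ge
    · exact h0
  have hUk : ∀ k, ∀ᶠ n in (u : Filter ℕ), 0 < μ n (E n \ C k n) := fun k =>
    (tendsto_ulim u _).eventually (isOpen_Ioi.mem_nhds (hkey k))
  set P : ℕ → ℕ → Prop := fun n k => ∀ j ≤ k, 0 < μ n (E n \ C j n) with hP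
  set f : ℕ → ℕ := fun n => Nat.findGreatest (P n) n with hf
  set x : ∀ n, X n := fun n =>
    if hp : 0 < μ n (E n \ C (f n) n) then (nonempty_of_measure_ne_zero hp.ne').choose
    else (hXne n).some with hx
  have hxmem : ∀ n, 0 < μ n (E n \ C (f n) n) → x n ∈ E n \ C (f n) n := by
    intro n hp
    rw [hx]
    simp only [dif_pos hp]
    exact (nonempty_of_measure_ne_zero hp.ne').choose_spec
  -- on a u-large set, `P n 0` holds, hence `P n (f n)` holds
  have hPf : ∀ᶠ n in (u : Filter ℕ), P n (f n) := by
    refine (hUk 0).mono fun n h0 => ?_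
    have hP0 : P n 0 := fun j hj => by
      interval_cases j
      exact h0
    exact Nat.findGreatest_spec (Nat.zero_le n) hP0
  have hxE : ∀ᶠ n in (u : Filter ℕ), x n ∈ E n := by
    refine hPf.mono fun n hPn => ?_
    exact (hxmem n (hPn (f n) le_rfl)).1
  obtain ⟨i, hi⟩ := Set.mem_iUnion.1 (hBc ((mem_uSet_iff u).2 hxE))
  have hxB : ∀ᶠ n in (u : Filter ℕ), x n ∈ B i n := (mem_uSet_iff u).1 hi
  have hPi : ∀ᶠ n in (u : Filter ℕ), P n (i + 1) := by
    have := (eventually_all_finset (Finset.range (i + 2))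
      (l := (u : Filter ℕ)) (p := fun j n => 0 < μ n (E n \ C j n))).2
      (fun j _ => hUk j)
    refine this.mono fun n hn j hj => hn j ?_
    exact Finset.mem_range_succ_iff.2 hj
  have hge : ∀ᶠ n in (u : Filter ℕ), i + 1 ≤ n := by
    refine Eventually.filter_mono hu ?_
    rw [Nat.cofinite_eq_atTop]
    exact eventually_ge_atTop (i + 1)
  have : ∀ᶠ n in (u : Filter ℕ), False := by
    filter_upwards [hxB, hPi, hge, hPf] with n hB' hP' hge' hPf'
    have hfn : i + 1 ≤ f n := Nat.le_findGreatest hge' hP'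
    have hxmem' : x n ∈ E n \ C (f n) n := hxmem n (hPf' (f n) le_rfl)
    refine hxmem'.2 ?_
    have : B i n ⊆ C (f n) n := by
      refine (Set.subset_biUnion_of_mem (u := fun j => B j n) ?_)
      exact Finset.mem_range.2 (lt_of_lt_of_le (Nat.lt_succ_self i) hfn)
    exact this hB'
  exact this.exists.elim fun _ h => h

theorem loebOuter_uSet (hu : (u : Filter ℕ) ≤ Filter.cofinite)
    {E : ∀ n, Set (X n)} (hE : ∀ n, MeasurableSet (E n)) :
    loebOuter u μ (uSet u E) = ulim u fun n => μ n (E n) :=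
  le_antisymm (loebOuter_le_uSet u μ hE subset_rfl)
    (le_iInf₂ fun B hB => sat u μ hu hE hB.1 hB.2)

theorem loebOuter_univ (hu : (u : Filter ℕ) ≤ Filter.cofinite) :
    loebOuter u μ (Set.univ : Set (UProd u X)) = 1 := by
  have := loebOuter_uSet u μ hu (E := fun n => Set.univ) (fun n => MeasurableSet.univ)
  rw [uSet_univ] at this
  rw [this]
  simpa [measure_univ] using ulim_const u 1

end Meas2

end LoebAux

namespace LoebAux

section Meas3

variable (u : Ultrafilter ℕ) {X : ℕ → Type*} [∀ n, MeasurableSpace (X n)]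
  (μ : ∀ n, Measure (X n)) [∀ n, IsProbabilityMeasure (μ n)]

theorem cancelENN {a a' b b' : ℝ≥0∞} (h1 : a ≤ a') (h2 : b ≤ b') (h3 : a' + b' ≤ a + b)
    (hb' : b' ≠ ⊤) : a = a' := by
  refine le_antisymm h1 ?_
  have h4 : a' + b' ≤ a + b' := h3.trans (add_le_add_right h2 a)
  exact (ENNReal.add_le_add_iff_right hb').1 h4

theorem loebOuter_union_le (A B : Set (UProd u X)) :
    loebOuter u μ (A ∪ B) ≤ loebOuter u μ A + loebOuter u μ B := by
  rw [loebOuter_eq u μ]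
  exact measure_union_le A B

/-- Every set has a Loeb-measurable hull of the same outer measure. -/
theorem exists_hull (S : Set (UProd u X)) :
    ∃ H, S ⊆ H ∧ LoebMeasurable u μ H ∧ loebOuter u μ H = loebOuter u μ S := by
  have key : ∀ k : ℕ, ∃ W : Set (UProd u X), S ⊆ W ∧ LoebMeasurable u μ W ∧
      loebOuter u μ W ≤ loebOuter u μ S + ((k : ℝ≥0∞) + 1)⁻¹ := by
    intro k
    have hfin : loebOuter u μ S ≠ ⊤ :=
      ((loebOuter_le_one u μ S).trans_lt (by norm_num)).ne
    have hne : ((k : ℝ≥0∞) + 1)⁻¹ ≠ 0 := by simp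
    have hlt : loebOuter u μ S < loebOuter u μ S + ((k : ℝ≥0∞) + 1)⁻¹ :=
      ENNReal.lt_add_right hfin hne
    rw [loebOuter, iInf_lt_iff] at hlt
    obtain ⟨B, hB⟩ := hlt
    rw [iInf_lt_iff] at hB
    obtain ⟨⟨hBm, hBc⟩, hBs⟩ := hB
    refine ⟨⋃ i, uSet u (B i), hBc, ?_, ?_⟩
    · rw [loebMeasurable_iff]
      exact MeasurableSet.iUnion fun i =>
        (loebMeasurable_iff u μ _).1 (uSet_loebMeasurable u μ (hBm i))
    · exact (loebOuter_le_cover u μ hBm subset_rfl).trans hBs.le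
  choose W hWs hWm hWle using key
  refine ⟨⋂ k, W k, Set.subset_iInter hWs, ?_, ?_⟩
  · rw [loebMeasurable_iff]
    exact MeasurableSet.iInter fun k => (loebMeasurable_iff u μ _).1 (hWm k)
  · refine le_antisymm ?_ (loebOuter_mono u μ (Set.subset_iInter hWs))
    refine ENNReal.le_of_forall_pos_le_add fun ε hε _ => ?_
    obtain ⟨k, hk⟩ := ENNReal.exists_inv_nat_lt
      (show (ε : ℝ≥0∞) ≠ 0 by exact_mod_cast hε.ne')
    have hk' : ((k : ℝ≥0∞) + 1)⁻¹ ≤ (ε : ℝ≥0∞) := by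
      refine le_trans ?_ hk.le
      exact ENNReal.inv_le_inv.2 (by simp)
    calc loebOuter u μ (⋂ j, W j) ≤ loebOuter u μ (W k) :=
          loebOuter_mono u μ (Set.iInter_subset W k)
      _ ≤ loebOuter u μ S + ((k : ℝ≥0∞) + 1)⁻¹ := hWle k
      _ ≤ loebOuter u μ S + ε := add_le_add_right hk' _

/-- The split criterion: a set whose outer measure together with that of its
complement adds up to at most `1` is Loeb measurable. -/
theorem loebMeasurable_of_split (hu : (u : Filter ℕ) ≤ Filter.cofinite)
    {A : Set (UProd u X)} (hsplit : loebOuter u μ A + loebOuter u μ Aᶜ ≤ 1) :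
    LoebMeasurable u μ A := by
  intro S
  obtain ⟨H, hSH, hHm, hHeq⟩ := exists_hull u μ S
  have hfin : ∀ T : Set (UProd u X), loebOuter u μ T ≠ ⊤ := fun T =>
    ((loebOuter_le_one u μ T).trans_lt (by norm_num)).ne
  have eA1 : loebOuter u μ (H ∩ A) + loebOuter u μ (Hᶜ ∩ A) = loebOuter u μ A := by
    refine le_antisymm ?_ ?_
    · have h := hHm A
      rw [Set.inter_comm A H, show A \ H = Hᶜ ∩ A by rw [Set.diff_eq, Set.inter_comm]] at h
      exact h
    · have hcup : (H ∩ A) ∪ (Hᶜ ∩ A) = A := by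
        rw [← Set.union_inter_distrib_right, Set.union_compl_self, Set.univ_inter]
      calc loebOuter u μ A = loebOuter u μ ((H ∩ A) ∪ (Hᶜ ∩ A)) := by rw [hcup]
        _ ≤ _ := loebOuter_union_le u μ _ _
  have eA2 : loebOuter u μ (H \ A) + loebOuter u μ (Hᶜ \ A) = loebOuter u μ Aᶜ := by
    refine le_antisymm ?_ ?_
    · have h := hHm Aᶜ
      rw [Set.inter_comm Aᶜ H, show Aᶜ \ H = Hᶜ \ A by
            rw [Set.diff_eq, Set.diff_eq, Set.inter_comm],
          show H ∩ Aᶜ = H \ A from (Set.diff_eq H A).symm] at h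
      exact h
    · have hcup : (H \ A) ∪ (Hᶜ \ A) = Aᶜ := by
        rw [Set.diff_eq, Set.diff_eq, ← Set.union_inter_distrib_right,
          Set.union_compl_self, Set.univ_inter]
      calc loebOuter u μ Aᶜ = loebOuter u μ ((H \ A) ∪ (Hᶜ \ A)) := by rw [hcup]
        _ ≤ _ := loebOuter_union_le u μ _ _
  have hHsub : loebOuter u μ H ≤ loebOuter u μ (H ∩ A) + loebOuter u μ (H \ A) := by
    have hcup : (H ∩ A) ∪ (H \ A) = H := Set.inter_union_diff H A
    calc loebOuter u μ H = loebOuter u μ ((H ∩ A) ∪ (H \ A)) := by rw [hcup]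
      _ ≤ _ := loebOuter_union_le u μ _ _
  have hHcsub : loebOuter u μ Hᶜ ≤ loebOuter u μ (Hᶜ ∩ A) + loebOuter u μ (Hᶜ \ A) := by
    have hcup : (Hᶜ ∩ A) ∪ (Hᶜ \ A) = Hᶜ := Set.inter_union_diff Hᶜ A
    calc loebOuter u μ Hᶜ = loebOuter u μ ((Hᶜ ∩ A) ∪ (Hᶜ \ A)) := by rw [hcup]
      _ ≤ _ := loebOuter_union_le u μ _ _
  have hHsplit : 1 ≤ loebOuter u μ H + loebOuter u μ Hᶜ := by
    calc (1 : ℝ≥0∞) = loebOuter u μ (Set.univ : Set (UProd u X)) :=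
          (loebOuter_univ u μ hu).symm
      _ = loebOuter u μ (H ∪ Hᶜ) := by rw [Set.union_compl_self]
      _ ≤ _ := loebOuter_union_le u μ _ _
  have hmain : loebOuter u μ H =
      loebOuter u μ (H ∩ A) + loebOuter u μ (H \ A) := by
    refine cancelENN hHsub hHcsub ?_ ?_
    · calc (loebOuter u μ (H ∩ A) + loebOuter u μ (H \ A)) +
          (loebOuter u μ (Hᶜ ∩ A) + loebOuter u μ (Hᶜ \ A))
          = (loebOuter u μ (H ∩ A) + loebOuter u μ (Hᶜ ∩ A)) +
            (loebOuter u μ (H \ A) + loebOuter u μ (Hᶜ \ A)) := by ring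
        _ = loebOuter u μ A + loebOuter u μ Aᶜ := by rw [eA1, eA2]
        _ ≤ 1 := hsplit
        _ ≤ _ := hHsplit
    · exact (ENNReal.add_lt_top.2 ⟨(loebOuter_le_one u μ _).trans_lt (by norm_num),
        (loebOuter_le_one u μ _).trans_lt (by norm_num)⟩).ne
  calc loebOuter u μ (S ∩ A) + loebOuter u μ (S \ A)
      ≤ loebOuter u μ (H ∩ A) + loebOuter u μ (H \ A) :=
        add_le_add (loebOuter_mono u μ (Set.inter_subset_inter_left A hSH))
          (loebOuter_mono u μ (Set.diff_subset_diff_left hSH))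
    _ = loebOuter u μ H := hmain.symm
    _ = loebOuter u μ S := hHeq

end Meas3

end LoebAux

namespace LoebAux

section Map

variable (u : Ultrafilter ℕ) {X : ℕ → Type*}

theorem uMap_uMk (g : ∀ n, X n → X n) (x : ∀ n, X n) :
    uMap u g (uMk u x) = uMk u (fun n => g n (x n)) := rfl

theorem preimage_uSet (g : ∀ n, X n → X n) (B : ∀ n, Set (X n)) :
    uMap u g ⁻¹' uSet u B = uSet u fun n => g n ⁻¹' B n := by
  ext z
  obtain ⟨x, rfl⟩ := Quot.exists_rep z
  show uMap u g (uMk u x) ∈ uSet u B ↔ uMk u x ∈ uSet u fun n => g n ⁻¹' B n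
  rw [uMap_uMk, mem_uSet_iff, mem_uSet_iff]
  exact Iff.rfl

variable [∀ n, MeasurableSpace (X n)] (μ : ∀ n, Measure (X n))
  [∀ n, IsProbabilityMeasure (μ n)]

theorem loebOuter_preimage_le (g : ∀ n, X n → X n)
    (hgm : ∀ n, MeasurePreserving (g n) (μ n) (μ n)) (A : Set (UProd u X)) :
    loebOuter u μ (uMap u g ⁻¹' A) ≤ loebOuter u μ A := by
  refine le_iInf₂ fun B hB => ?_
  obtain ⟨hBm, hBc⟩ := hB
  have hc : uMap u g ⁻¹' A ⊆ ⋃ i, uSet u fun n => g n ⁻¹' B i n := by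
    refine (Set.preimage_mono hBc).trans ?_
    rw [Set.preimage_iUnion]
    exact Set.iUnion_mono fun i => (preimage_uSet u g (B i)).le
  refine (loebOuter_le_cover u μ (fun i n => (hgm n).measurable (hBm i n)) hc).trans_eq ?_
  refine tsum_congr fun i => ?_
  congr 1
  funext n
  exact (hgm n).measure_preimage (hBm i n).nullMeasurableSet

end Map

end LoebAux


/-- A sequence of measure-preserving bijections `g n` of `(X n, μ n)`
induces (via `T [x_n]_u = [g n (x_n)]_u`, well defined by construction of `uMap`) a
measure-preserving bijection of the Loeb space; moreover for two such sequences
`g, h` the uniform distance of the induced maps equals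
`lim_u μ_n {x | g n x ≠ h n x}`.  This realises the isometric embedding of the
metric ultraproduct of the automorphism groups `Aut (X n, μ n)` (with their uniform
metrics) into the automorphism group of the Loeb space. -/
theorem loeb_automorphism_ultraproduct (u : Ultrafilter ℕ)
    (hu : (u : Filter ℕ) ≤ Filter.cofinite)
    {X : ℕ → Type*} [∀ n, MeasurableSpace (X n)]
    (μ : ∀ n, Measure (X n)) [∀ n, IsProbabilityMeasure (μ n)]
    (g h : ∀ n, X n → X n)
    (hgm : ∀ n, MeasurePreserving (g n) (μ n) (μ n)) (hgb : ∀ n, Function.Bijective (g n))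
    (hhm : ∀ n, MeasurePreserving (h n) (μ n) (μ n)) (hhb : ∀ n, Function.Bijective (h n))
    (hgh : ∀ n, MeasurableSet {x : X n | g n x ≠ h n x}) :
    Function.Bijective (uMap u g) ∧
    (∀ A : Set (UProd u X), LoebMeasurable u μ A →
      LoebMeasurable u μ (uMap u g ⁻¹' A) ∧
        loebOuter u μ (uMap u g ⁻¹' A) = loebOuter u μ A) ∧
    LoebMeasurable u μ {z : UProd u X | uMap u g z ≠ uMap u h z} ∧
    loebOuter u μ {z : UProd u X | uMap u g z ≠ uMap u h z} =
      ulim u fun n => μ n {x : X n | g n x ≠ h n x} := by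
  classical
  open LoebAux in
  refine ⟨?_, ?_, ?_, ?_⟩
  · constructor
    · intro a b hab
      obtain ⟨x, rfl⟩ := Quot.exists_rep a
      obtain ⟨y, rfl⟩ := Quot.exists_rep b
      have hr : uRel u (fun n => g n (x n)) (fun n => g n (y n)) :=
        (LoebAux.uMk_eq_iff u).1 hab
      exact Quot.sound (hr.mono fun n e => (hgb n).1 e)
    · intro b
      obtain ⟨y, rfl⟩ := Quot.exists_rep b
      refine ⟨uMk u fun n => Classical.choose ((hgb n).2 (y n)), ?_⟩
      rw [LoebAux.uMap_uMk]
      exact Quot.sound (Filter.Eventually.of_forall fun n =>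
        Classical.choose_spec ((hgb n).2 (y n)))
  · intro A hA
    have hAsplit : loebOuter u μ A + loebOuter u μ Aᶜ = 1 := by
      refine le_antisymm ?_ ?_
      · have hA' := hA Set.univ
        rw [Set.univ_inter, show Set.univ \ A = Aᶜ by
          rw [Set.diff_eq, Set.univ_inter]] at hA'
        exact hA'.trans_eq (LoebAux.loebOuter_univ u μ hu)
      · calc (1 : ℝ≥0∞) = loebOuter u μ (Set.univ : Set (UProd u X)) :=
              (LoebAux.loebOuter_univ u μ hu).symm
          _ = loebOuter u μ (A ∪ Aᶜ) := by rw [Set.union_compl_self]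
          _ ≤ _ := LoebAux.loebOuter_union_le u μ _ _
    have hpre : loebOuter u μ (uMap u g ⁻¹' A) ≤ loebOuter u μ A :=
      LoebAux.loebOuter_preimage_le u μ g hgm A
    have hcompl : (uMap u g ⁻¹' A)ᶜ = uMap u g ⁻¹' Aᶜ := (Set.preimage_compl).symm
    have hprec : loebOuter u μ (uMap u g ⁻¹' A)ᶜ ≤ loebOuter u μ Aᶜ := by
      rw [hcompl]
      exact LoebAux.loebOuter_preimage_le u μ g hgm Aᶜ
    have hone : loebOuter u μ A + loebOuter u μ Aᶜ ≤
        loebOuter u μ (uMap u g ⁻¹' A) + loebOuter u μ (uMap u g ⁻¹' A)ᶜ := by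
      rw [hAsplit]
      calc (1 : ℝ≥0∞) = loebOuter u μ (Set.univ : Set (UProd u X)) :=
            (LoebAux.loebOuter_univ u μ hu).symm
        _ = loebOuter u μ ((uMap u g ⁻¹' A) ∪ (uMap u g ⁻¹' A)ᶜ) := by
            rw [Set.union_compl_self]
        _ ≤ _ := LoebAux.loebOuter_union_le u μ _ _
    have hAne : loebOuter u μ Aᶜ ≠ ⊤ :=
      ((LoebAux.loebOuter_le_one u μ _).trans_lt (by norm_num)).ne
    have heq : loebOuter u μ (uMap u g ⁻¹' A) = loebOuter u μ A :=
      LoebAux.cancelENN hpre hprec hone hAne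
    refine ⟨?_, heq⟩
    refine LoebAux.loebMeasurable_of_split u μ hu ?_
    calc loebOuter u μ (uMap u g ⁻¹' A) + loebOuter u μ (uMap u g ⁻¹' A)ᶜ
        ≤ loebOuter u μ A + loebOuter u μ Aᶜ := add_le_add hpre hprec
      _ = 1 := hAsplit
  · have hD : {z : UProd u X | uMap u g z ≠ uMap u h z} =
        uSet u (fun n => {x : X n | g n x ≠ h n x}) := by
      ext z
      obtain ⟨x, rfl⟩ := Quot.exists_rep z
      show uMap u g (uMk u x) ≠ uMap u h (uMk u x) ↔
        uMk u x ∈ uSet u fun n => {x : X n | g n x ≠ h n x}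
      rw [LoebAux.uMap_uMk, LoebAux.uMap_uMk, LoebAux.mem_uSet_iff, Ne,
        LoebAux.uMk_eq_iff]
      exact Iff.symm Ultrafilter.eventually_not
    rw [hD]
    exact LoebAux.uSet_loebMeasurable u μ hgh
  · have hD : {z : UProd u X | uMap u g z ≠ uMap u h z} =
        uSet u (fun n => {x : X n | g n x ≠ h n x}) := by
      ext z
      obtain ⟨x, rfl⟩ := Quot.exists_rep z
      show uMap u g (uMk u x) ≠ uMap u h (uMk u x) ↔
        uMk u x ∈ uSet u fun n => {x : X n | g n x ≠ h n x}
      rw [LoebAux.uMap_uMk, LoebAux.uMap_uMk, LoebAux.mem_uSet_iff, Ne,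
        LoebAux.uMk_eq_iff]
      exact Iff.symm Ultrafilter.eventually_not
    rw [hD]
    exact LoebAux.loebOuter_uSet u μ hu hgh
end

section
/- Let a, a_1, a_2, … be pmp actions of a countable group G on probability spaces and let F ⊆ G be a finite subset. Then the following are equivalent: (1) for every finite measurable partition α of X_a, lim_{n→∞} d_{F,α}(a, a_n) = 0; (2) for every k ∈ ℕ, lim_{n→∞} d_{F,k}(a, a_n) = 0. -/
open MeasureTheory Filter Topology
open scoped ENNReal symmDiff



/-! Probability-measure-preserving actions, partitions, and weak containment. -/

/-- `a` is a probability-measure-preserving (pmp) action of the group `G` on the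
measure space `(X, μ)`. -/
def IsPMP {G : Type*} [Group G] {X : Type*} [MeasurableSpace X]
    (μ : Measure X) (a : G → X → X) : Prop :=
  (∀ g : G, MeasurePreserving (a g) μ μ) ∧ (∀ x, a 1 x = x) ∧
    ∀ (g h : G) (x : X), a (g * h) x = a g (a h x)

/-- The translate `g · A` of a subset `A` under the action `a`. -/
def actSet {G X : Type*} (a : G → X → X) (g : G) (A : Set X) : Set X :=
  a g '' A

/-- An (exact) finite measurable partition of `X` with `k` atoms. -/
def IsPartition {X : Type*} [MeasurableSpace X] {k : ℕ} (P : Fin k → Set X) : Prop :=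
  (∀ i, MeasurableSet (P i)) ∧ Pairwise (Function.onFun Disjoint P) ∧ ⋃ i, P i = Set.univ

/-- `‖c(a,F,P) - c(b,F,Q)‖₁ = ∑_{i,j ≤ k} ∑_{f ∈ F} |μ(Pᵢ ∩ f·Pⱼ) - ν(Qᵢ ∩ f·Qⱼ)|`,
the `ℓ¹`-distance between the `F`-statistics of the two partitions. -/
noncomputable def statDist {G : Type*} {X Y : Type*} [MeasurableSpace X] [MeasurableSpace Y]
    (μ : Measure X) (a : G → X → X) (ν : Measure Y) (b : G → Y → Y)
    (F : Finset G) {k : ℕ} (P : Fin k → Set X) (Q : Fin k → Set Y) : ℝ :=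
  ∑ i : Fin k, ∑ j : Fin k, ∑ f ∈ F,
    |(μ (P i ∩ actSet a f (P j))).toReal - (ν (Q i ∩ actSet b f (Q j))).toReal|

/-- `d_{F,P}(a,b)`: the infimum over `k`-atom partitions `Q` of `X_b` of
`‖c(a,F,P) - c(b,F,Q)‖₁`. -/
noncomputable def dPart {G : Type*} {X Y : Type*} [MeasurableSpace X] [MeasurableSpace Y]
    (μ : Measure X) (a : G → X → X) (ν : Measure Y) (b : G → Y → Y)
    (F : Finset G) {k : ℕ} (P : Fin k → Set X) : ℝ :=
  sInf {r : ℝ | ∃ Q : Fin k → Set Y, IsPartition Q ∧ r = statDist μ a ν b F P Q}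

/-- `d_{F,k}(a,b)`: the supremum over `k`-atom partitions `P` of `X_a` of `d_{F,P}(a,b)`. -/
noncomputable def dNum {G : Type*} {X Y : Type*} [MeasurableSpace X] [MeasurableSpace Y]
    (μ : Measure X) (a : G → X → X) (ν : Measure Y) (b : G → Y → Y)
    (F : Finset G) (k : ℕ) : ℝ :=
  sSup {r : ℝ | ∃ P : Fin k → Set X, IsPartition P ∧ r = dPart μ a ν b F P}

/-- Weak containment `a ≺ b` of pmp actions: every finite partition of `X_a` and
every finite set of group elements can be `ε`-simulated by a partition of `X_b`. -/
def WC {G : Type*} {X Y : Type*} [MeasurableSpace X] [MeasurableSpace Y]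
    (μ : Measure X) (a : G → X → X) (ν : Measure Y) (b : G → Y → Y) : Prop :=
  ∀ ε : ℝ, 0 < ε → ∀ (F : Finset G) (k : ℕ) (P : Fin k → Set X), IsPartition P →
    ∃ Q : Fin k → Set Y, IsPartition Q ∧ statDist μ a ν b F P Q ≤ ε

/-- The measure `μ` is diffuse (atomless in the sense of measure algebras):
every non-null measurable set contains a measurable subset of strictly
intermediate measure. -/
def Diffuse {X : Type*} [MeasurableSpace X] (μ : Measure X) : Prop :=
  ∀ A : Set X, MeasurableSet A → μ A ≠ 0 →
    ∃ B : Set X, MeasurableSet B ∧ B ⊆ A ∧ 0 < μ B ∧ μ B < μ A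

/-- Diffuseness relative to a sub-σ-algebra `m`. -/
def DiffuseOn {X : Type*} (m : MeasurableSpace X) {m0 : MeasurableSpace X}
    (μ : Measure X) : Prop :=
  ∀ A : Set X, MeasurableSet[m] A → μ A ≠ 0 →
    ∃ B : Set X, MeasurableSet[m] B ∧ B ⊆ A ∧ 0 < μ B ∧ μ B < μ A
section Aux

variable {G : Type*} {X Y Z : Type*} [MeasurableSpace X] [MeasurableSpace Y] [MeasurableSpace Z]

lemma statDist_nonneg (μ : Measure X) (a : G → X → X) (ν : Measure Y) (b : G → Y → Y)
    (F : Finset G) {k : ℕ} (P : Fin k → Set X) (Q : Fin k → Set Y) :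
    0 ≤ statDist μ a ν b F P Q := by
  unfold statDist; positivity

lemma exists_partition (Y : Type*) [MeasurableSpace Y] {k : ℕ} (hk : k ≠ 0) :
    ∃ Q : Fin k → Set Y, IsPartition Q := by
  obtain ⟨m, rfl⟩ := Nat.exists_eq_succ_of_ne_zero hk
  refine ⟨fun i => if i = 0 then Set.univ else ∅, fun i => ?_, ?_, ?_⟩
  · simp only []
    by_cases hi : i = 0 <;> simp [hi]
  · intro i j hij
    unfold Function.onFun
    rcases eq_or_ne i 0 with rfl | hi
    · simp [hij.symm]
    · simp [hi]
  · rw [Set.eq_univ_iff_forall]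
    intro x
    exact Set.mem_iUnion.2 ⟨0, by simp⟩

lemma partition_k_ne_zero (μ : Measure X) [IsProbabilityMeasure μ] {k : ℕ}
    {P : Fin k → Set X} (hP : IsPartition P) : k ≠ 0 := by
  rintro rfl
  have h : μ (⋃ i : Fin 0, P i) = 1 := by rw [hP.2.2]; simp
  simp at h

lemma toReal_prob_le_one (μ : Measure X) [IsProbabilityMeasure μ] (s : Set X) :
    (μ s).toReal ≤ 1 := by
  have := ENNReal.toReal_mono (by simp) (prob_le_one (μ := μ) (s := s))
  simpa using this

lemma statDist_le_card (μ : Measure X) [IsProbabilityMeasure μ] (a : G → X → X)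
    (ν : Measure Y) [IsProbabilityMeasure ν] (b : G → Y → Y)
    (F : Finset G) {k : ℕ} (P : Fin k → Set X) (Q : Fin k → Set Y) :
    statDist μ a ν b F P Q ≤ (k * k * F.card : ℝ) := by
  unfold statDist
  calc (∑ i : Fin k, ∑ j : Fin k, ∑ f ∈ F,
        |(μ (P i ∩ actSet a f (P j))).toReal - (ν (Q i ∩ actSet b f (Q j))).toReal|)
      ≤ ∑ _i : Fin k, ∑ _j : Fin k, ∑ _f ∈ F, (1 : ℝ) := by
        refine Finset.sum_le_sum fun i _ => Finset.sum_le_sum fun j _ =>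
          Finset.sum_le_sum fun f _ => ?_
        rw [abs_sub_le_iff]
        constructor
        · linarith [toReal_prob_le_one μ (P i ∩ actSet a f (P j)),
            ENNReal.toReal_nonneg (a := ν (Q i ∩ actSet b f (Q j)))]
        · linarith [toReal_prob_le_one ν (Q i ∩ actSet b f (Q j)),
            ENNReal.toReal_nonneg (a := μ (P i ∩ actSet a f (P j)))]
    _ = (k * k * F.card : ℝ) := by
        simp [Finset.sum_const, Finset.card_univ]
        ring

lemma dPart_bddBelow (μ : Measure X) (a : G → X → X) (ν : Measure Y) (b : G → Y → Y)
    (F : Finset G) {k : ℕ} (P : Fin k → Set X) :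
    BddBelow {r : ℝ | ∃ Q : Fin k → Set Y, IsPartition Q ∧ r = statDist μ a ν b F P Q} := by
  refine ⟨0, ?_⟩
  rintro r ⟨Q, hQ, rfl⟩
  exact statDist_nonneg μ a ν b F P Q

lemma dPart_nonneg (μ : Measure X) (a : G → X → X) (ν : Measure Y) (b : G → Y → Y)
    (F : Finset G) {k : ℕ} (P : Fin k → Set X) :
    0 ≤ dPart μ a ν b F P := by
  apply Real.sInf_nonneg
  rintro r ⟨Q, hQ, rfl⟩
  exact statDist_nonneg μ a ν b F P Q

lemma dPart_le_statDist (μ : Measure X) (a : G → X → X) (ν : Measure Y) (b : G → Y → Y)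
    (F : Finset G) {k : ℕ} (P : Fin k → Set X) {Q : Fin k → Set Y} (hQ : IsPartition Q) :
    dPart μ a ν b F P ≤ statDist μ a ν b F P Q :=
  csInf_le (dPart_bddBelow μ a ν b F P) ⟨Q, hQ, rfl⟩

lemma statDist_triangle (μ : Measure X) (a : G → X → X) (η : Measure Z) (c : G → Z → Z)
    (ν : Measure Y) (b : G → Y → Y) (F : Finset G) {k : ℕ}
    (P : Fin k → Set X) (R : Fin k → Set Z) (Q : Fin k → Set Y) :
    statDist μ a ν b F P Q ≤ statDist μ a η c F P R + statDist η c ν b F R Q := by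
  unfold statDist
  rw [← Finset.sum_add_distrib]
  refine Finset.sum_le_sum fun i _ => ?_
  rw [← Finset.sum_add_distrib]
  refine Finset.sum_le_sum fun j _ => ?_
  rw [← Finset.sum_add_distrib]
  exact Finset.sum_le_sum fun f _ => abs_sub_le _ _ _

lemma dPart_triangle (μ : Measure X) (a : G → X → X) (ν : Measure Y) (b : G → Y → Y)
    (F : Finset G) {k : ℕ} (hk : k ≠ 0) (P P' : Fin k → Set X) :
    dPart μ a ν b F P ≤ statDist μ a μ a F P P' + dPart μ a ν b F P' := by
  obtain ⟨Q₀, hQ₀⟩ := exists_partition Y (k := k) hk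
  have hne : {r : ℝ | ∃ Q : Fin k → Set Y, IsPartition Q ∧
      r = statDist μ a ν b F P' Q}.Nonempty := ⟨_, Q₀, hQ₀, rfl⟩
  have key : dPart μ a ν b F P - statDist μ a μ a F P P' ≤ dPart μ a ν b F P' := by
    refine le_csInf hne ?_
    rintro r ⟨Q, hQ, rfl⟩
    have h1 := dPart_le_statDist μ a ν b F P hQ
    have h2 := statDist_triangle μ a μ a ν b F P P' Q
    linarith
  linarith

noncomputable def statVec (μ : Measure X) (a : G → X → X) (F : Finset G) {k : ℕ}
    (P : Fin k → Set X) : Fin k × Fin k × F → ℝ :=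
  fun x => (μ (P x.1 ∩ actSet a (x.2.2 : G) (P x.2.1))).toReal

lemma statDist_eq_sum (μ : Measure X) (a : G → X → X) (ν : Measure Y) (b : G → Y → Y)
    (F : Finset G) {k : ℕ} (P : Fin k → Set X) (Q : Fin k → Set Y) :
    statDist μ a ν b F P Q =
      ∑ x : Fin k × Fin k × F, |statVec μ a F P x - statVec ν b F Q x| := by
  unfold statDist statVec
  rw [Fintype.sum_prod_type]
  refine Finset.sum_congr rfl fun i _ => ?_
  rw [Fintype.sum_prod_type]
  refine Finset.sum_congr rfl fun j _ => ?_
  exact (Finset.sum_coe_sort F _).symm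

lemma statDist_le_dist (μ : Measure X) (a : G → X → X) (ν : Measure Y) (b : G → Y → Y)
    (F : Finset G) {k : ℕ} (P : Fin k → Set X) (Q : Fin k → Set Y) :
    statDist μ a ν b F P Q ≤
      (Fintype.card (Fin k × Fin k × F) : ℝ) * dist (statVec μ a F P) (statVec ν b F Q) := by
  rw [statDist_eq_sum]
  calc (∑ x : Fin k × Fin k × F, |statVec μ a F P x - statVec ν b F Q x|)
      ≤ ∑ _x : Fin k × Fin k × F, dist (statVec μ a F P) (statVec ν b F Q) := by
        refine Finset.sum_le_sum fun x _ => ?_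
        rw [← Real.dist_eq]
        exact dist_le_pi_dist _ _ x
    _ = _ := by rw [Finset.sum_const, Finset.card_univ, nsmul_eq_mul]

lemma dPart_le_dNum (μ : Measure X) [IsProbabilityMeasure μ] (a : G → X → X)
    (ν : Measure Y) [IsProbabilityMeasure ν] (b : G → Y → Y)
    (F : Finset G) {k : ℕ} {P : Fin k → Set X} (hP : IsPartition P) :
    dPart μ a ν b F P ≤ dNum μ a ν b F k := by
  refine le_csSup ⟨(k * k * F.card : ℝ), ?_⟩ ⟨P, hP, rfl⟩
  rintro r ⟨P', hP', rfl⟩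
  obtain ⟨Q, hQ⟩ := exists_partition Y (partition_k_ne_zero μ hP')
  exact (dPart_le_statDist μ a ν b F P' hQ).trans (statDist_le_card μ a ν b F P' Q)

end Aux

/-- For pmp actions `a, a₁, a₂, …` of a countable group and a finite
`F ⊆ G`, the convergence `d_{F,P}(a, a_n) → 0` for every finite partition `P` of `X_a`
is equivalent to `d_{F,k}(a, a_n) → 0` for every `k`. -/
theorem dPart_tendsto_iff_dNum_tendsto {G : Type*} [Group G] [Countable G]
    {X : Type*} [MeasurableSpace X]
    (μ : Measure X) [IsProbabilityMeasure μ] (a : G → X → X) (ha : IsPMP μ a)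
    {Y : ℕ → Type*} [∀ n, MeasurableSpace (Y n)]
    (ν : ∀ n, Measure (Y n)) [∀ n, IsProbabilityMeasure (ν n)]
    (b : ∀ n, G → Y n → Y n) (hb : ∀ n, IsPMP (ν n) (b n))
    (F : Finset G) :
    (∀ (k : ℕ) (P : Fin k → Set X), IsPartition P →
        Tendsto (fun n => dPart μ a (ν n) (b n) F P) atTop (nhds 0)) ↔
    (∀ k : ℕ, Tendsto (fun n => dNum μ a (ν n) (b n) F k) atTop (nhds 0)) := by
  constructor
  · intro h1 k
    rw [Metric.tendsto_atTop]
    intro ε hε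
    set D : ℝ := (Fintype.card (Fin k × Fin k × F) : ℝ) with hD
    have hD0 : 0 ≤ D := Nat.cast_nonneg _
    have hDpos : 0 < 2 * (D + 1) := by linarith
    set B : ℝ := ε / (2 * (D + 1)) with hB
    have hBpos : 0 < B := div_pos hε hDpos
    -- the set of statistics vectors is totally bounded
    set S : Set (Fin k × Fin k × F → ℝ) :=
      {v | ∃ P : Fin k → Set X, IsPartition P ∧ v = statVec μ a F P} with hS
    have hTB : TotallyBounded S := by
      refine (isCompact_univ_pi fun _ : Fin k × Fin k × F =>
        isCompact_Icc (a := (0:ℝ)) (b := 1)).totallyBounded.subset ?_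
      rintro v ⟨P, hP, rfl⟩
      intro x _
      exact ⟨ENNReal.toReal_nonneg, toReal_prob_le_one μ _⟩
    obtain ⟨t, htS, htfin, htcov⟩ := Metric.finite_approx_of_totallyBounded hTB B hBpos
    -- pick a partition realizing each center
    have hsel : ∀ y : t, ∃ P : Fin k → Set X, IsPartition P ∧ (y : _) = statVec μ a F P :=
      fun y => htS y.2
    choose Pc hPc hvc using hsel
    haveI : Finite t := htfin.to_subtype
    -- eventually all centers have small dPart
    have hEv : ∀ᶠ n in atTop, ∀ y : t,
        dPart μ a (ν n) (b n) F (Pc y) ≤ ε / 2 := by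
      rw [eventually_all]
      intro y
      exact (h1 k (Pc y) (hPc y)).eventually (eventually_le_nhds (half_pos hε))
    obtain ⟨N, hN⟩ := eventually_atTop.mp hEv
    refine ⟨N, fun n hn => ?_⟩
    have hbound : dNum μ a (ν n) (b n) F k ≤ D * B + ε / 2 := by
      apply Real.sSup_le
      · rintro r ⟨P, hP, rfl⟩
        have hk : k ≠ 0 := partition_k_ne_zero μ hP
        have hmem : statVec μ a F P ∈ ⋃ y ∈ t, Metric.ball y B := htcov ⟨P, hP, rfl⟩
        rw [Set.mem_iUnion₂] at hmem
        obtain ⟨y, hy, hball⟩ := hmem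
        have hdist : dist (statVec μ a F P) (statVec μ a F (Pc ⟨y, hy⟩)) < B := by
          rw [← hvc ⟨y, hy⟩]
          exact Metric.mem_ball.mp hball
        have hdnn : (0:ℝ) ≤ dist (statVec μ a F P) (statVec μ a F (Pc ⟨y, hy⟩)) :=
          dist_nonneg
        have h3 : statDist μ a μ a F P (Pc ⟨y, hy⟩) ≤ D * dist (statVec μ a F P)
            (statVec μ a F (Pc ⟨y, hy⟩)) := statDist_le_dist μ a μ a F P (Pc ⟨y, hy⟩)
        have h4 := dPart_triangle μ a (ν n) (b n) F hk P (Pc ⟨y, hy⟩)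
        have h5 := hN n hn ⟨y, hy⟩
        nlinarith
      · have : D * B ≥ 0 := mul_nonneg hD0 hBpos.le
        linarith
    have hnn : 0 ≤ dNum μ a (ν n) (b n) F k := by
      apply Real.sSup_nonneg
      rintro r ⟨P, hP, rfl⟩
      exact dPart_nonneg μ a (ν n) (b n) F P
    rw [Real.dist_eq, sub_zero, abs_of_nonneg hnn]
    have hDB : D * B < (D + 1) * B := by nlinarith
    have : (D + 1) * B = ε / 2 := by
      field_simp [hB]
      rw [hB]; linear_combination div_mul_cancel₀ ε (ne_of_gt hDpos)
    linarith
  · intro h2 k P hP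
    refine squeeze_zero (fun n => dPart_nonneg μ a (ν n) (b n) F P)
      (fun n => dPart_le_dNum μ a (ν n) (b n) F hP) (h2 k)
end

section
/- Let (X, μ) be an atomless standard Borel probability space, let b be a pmp action of a countable group G on some probability space, and let a, a_1, a_2, … be pmp actions of G on (X, μ) such that a_n → a in the weak topology (for every g ∈ G and every measurable A ⊆ X, μ(a_n(g)(A) Δ a(g)(A)) → 0). If a_n ≺ b for every n, then a ≺ b. In other words, the set of pmp actions on (X, μ) weakly contained in b is weakly closed. -/
open MeasureTheory Filter Topology
open scoped ENNReal symmDiff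



lemma abs_toReal_measure_inter_sub_le {X : Type*} [MeasurableSpace X]
    (μ : Measure X) [IsFiniteMeasure μ] (A S T : Set X) :
    |(μ (A ∩ S)).toReal - (μ (A ∩ T)).toReal| ≤ (μ (S ∆ T)).toReal := by
  have hsub : ∀ S T : Set X, A ∩ S ⊆ (A ∩ T) ∪ (S ∆ T) := by
    intro S T x hx
    rcases hx with ⟨hA, hS⟩
    by_cases hT : x ∈ T
    · exact Or.inl ⟨hA, hT⟩
    · exact Or.inr (Or.inl ⟨hS, hT⟩)
  have key : ∀ S T : Set X, (μ (A ∩ S)).toReal ≤ (μ (A ∩ T)).toReal + (μ (S ∆ T)).toReal := by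
    intro S T
    have h1 : μ (A ∩ S) ≤ μ (A ∩ T) + μ (S ∆ T) :=
      le_trans (measure_mono (hsub S T)) (measure_union_le _ _)
    rw [← ENNReal.toReal_add (measure_ne_top μ _) (measure_ne_top μ _)]
    exact ENNReal.toReal_mono (ENNReal.add_ne_top.mpr ⟨measure_ne_top μ _, measure_ne_top μ _⟩) h1
  have h2 := key T S
  rw [symmDiff_comm] at h2
  have h1 := key S T
  rw [abs_sub_le_iff]
  constructor <;> linarith

/-- If pmp actions `a_n` on an atomless standard Borel probability
space `(X, μ)` converge weakly to `a` and each `a_n` is weakly contained in `b`, then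
`a` is weakly contained in `b`: the set of actions weakly contained in `b` is weakly
closed. -/
theorem wc_weakly_closed {G : Type*} [Group G] [Countable G]
    {X : Type*} [MeasurableSpace X] [StandardBorelSpace X]
    (μ : Measure X) [IsProbabilityMeasure μ] [NullSingletonClass μ]
    {Y : Type*} [MeasurableSpace Y]
    (ν : Measure Y) [IsProbabilityMeasure ν] (b : G → Y → Y) (hb : IsPMP ν b)
    (a : G → X → X) (ha : IsPMP μ a)
    (c : ℕ → G → X → X) (hc : ∀ n, IsPMP μ (c n))
    (hconv : ∀ (g : G) (A : Set X), MeasurableSet A →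
      Tendsto (fun n => μ ((c n g '' A) ∆ (a g '' A))) atTop (nhds 0))
    (hwc : ∀ n, WC μ (c n) ν b) :
    WC μ a ν b := by
  intro ε hε F k P hP
  set m : ℝ := (k : ℝ) * (k : ℝ) * (F.card : ℝ) with hm_def
  have hm : (0:ℝ) ≤ m := by positivity
  set δ : ℝ := ε / 2 / (m + 1) with hδ_def
  have hδ : 0 < δ := by positivity
  have hev : ∀ᶠ n in atTop, ∀ j : Fin k, ∀ f ∈ F,
      (μ ((c n f '' P j) ∆ (a f '' P j))).toReal < δ := by
    rw [eventually_all]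
    intro j
    rw [Filter.eventually_all_finset]
    intro f hf
    have h2 : ∀ᶠ n in atTop, μ ((c n f '' P j) ∆ (a f '' P j)) < ENNReal.ofReal δ :=
      (hconv f (P j) (hP.1 j)).eventually_lt_const (by simp [hδ])
    filter_upwards [h2] with n hn
    exact ENNReal.toReal_lt_of_lt_ofReal hn
  obtain ⟨n, hn⟩ := hev.exists
  obtain ⟨Q, hQ, hQd⟩ := hwc n (ε / 2) (by linarith) F k P hP
  refine ⟨Q, hQ, ?_⟩
  have hterm : ∀ i j : Fin k, ∀ f ∈ F,
      |(μ (P i ∩ actSet a f (P j))).toReal - (ν (Q i ∩ actSet b f (Q j))).toReal| ≤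
      |(μ (P i ∩ actSet (c n) f (P j))).toReal - (ν (Q i ∩ actSet b f (Q j))).toReal| + δ := by
    intro i j f hf
    have h1 := abs_toReal_measure_inter_sub_le μ (P i) (actSet a f (P j)) (actSet (c n) f (P j))
    have h2 : (μ ((actSet a f (P j)) ∆ (actSet (c n) f (P j)))).toReal < δ := by
      rw [symmDiff_comm]; exact hn j f hf
    have h3 := abs_sub_le ((μ (P i ∩ actSet a f (P j))).toReal)
      ((μ (P i ∩ actSet (c n) f (P j))).toReal) ((ν (Q i ∩ actSet b f (Q j))).toReal)
    linarith
  have hsum : statDist μ a ν b F P Q ≤ statDist μ (c n) ν b F P Q + m * δ := by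
    have : statDist μ a ν b F P Q ≤ ∑ i : Fin k, ∑ j : Fin k, ∑ f ∈ F,
        (|(μ (P i ∩ actSet (c n) f (P j))).toReal - (ν (Q i ∩ actSet b f (Q j))).toReal| + δ) := by
      refine Finset.sum_le_sum fun i _ => Finset.sum_le_sum fun j _ => Finset.sum_le_sum
        fun f hf => hterm i j f hf
    calc statDist μ a ν b F P Q ≤ _ := this
      _ = statDist μ (c n) ν b F P Q + m * δ := by
          simp only [Finset.sum_add_distrib, Finset.sum_const, nsmul_eq_mul, statDist,
            Finset.card_univ, Fintype.card_fin, hm_def]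
          push_cast
          ring
  have hmd : m * δ ≤ ε / 2 := by
    have h1 : m / (m + 1) ≤ 1 := by
      rw [div_le_one (by linarith)]; linarith
    calc m * (ε / 2 / (m + 1)) = (ε / 2) * (m / (m + 1)) := by ring
      _ ≤ (ε / 2) * 1 := by
          apply mul_le_mul_of_nonneg_left h1 (by linarith)
      _ = ε / 2 := by ring
  linarith
end

section
/- Let a and b be pmp actions of a countable group G on atomless standard Borel probability spaces (X_a, μ_a) and (X_b, μ_b), and for g ∈ G write Fix_g(a) := {x ∈ X_a : g·x = x} and |Fix_g(a)| := μ_a(Fix_g(a)). If a ≺ b, then |Fix_g(b)| ≤ |Fix_g(a)| for every g ∈ G. In particular, if a and b are weakly equivalent then |Fix_g(a)| = |Fix_g(b)| for every g ∈ G, so g ↦ |Fix_g(·)| is well defined on weak equivalence classes. -/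
open MeasureTheory Filter Topology
open scoped ENNReal symmDiff



private lemma exists_good_partition {G : Type*} [Group G]
    {X : Type*} [MeasurableSpace X] [StandardBorelSpace X]
    (μ : Measure X) [IsProbabilityMeasure μ]
    (a : G → X → X) (ha : IsPMP μ a) (g : G) {ε : ℝ≥0∞} (hε : 0 < ε) :
    ∃ (k : ℕ) (P : Fin k → Set X), IsPartition P ∧
      ∑ i, μ (P i ∩ actSet a g (P i)) ≤ μ {x | a g x = x} + ε := by
  have hT : Measurable (a g) := (ha.1 g).measurable
  obtain ⟨S, hSm, hSsep⟩ :=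
    exists_seq_separating X MeasurableSet.empty Set.univ
  set V : ℕ → Set X := fun n => if Even n then S (n / 2) else (S (n / 2))ᶜ with hV
  set C : ℕ → Set X := fun n => V n ∩ (a g) ⁻¹' (V n)ᶜ with hC
  have hCm : ∀ n, MeasurableSet (C n) := by
    intro n
    have hVm : MeasurableSet (V n) := by
      simp only [hV]; split_ifs
      · exact hSm _
      · exact (hSm _).compl
    exact hVm.inter (hT hVm.compl)
  have hCdisj : ∀ n, C n ∩ actSet a g (C n) = ∅ := by
    intro n
    ext x
    simp only [Set.mem_inter_iff, Set.mem_empty_iff_false, iff_false, actSet,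
      Set.mem_image, Set.mem_preimage, Set.mem_compl_iff]
    rintro ⟨⟨hxV, _⟩, z, ⟨_, hz2⟩, rfl⟩
    exact hz2 hxV
  have hcover : {x | a g x = x}ᶜ ⊆ ⋃ n, C n := by
    intro x hx
    have hxne : a g x ≠ x := hx
    have : ¬ ∀ n, a g x ∈ S n ↔ x ∈ S n := fun h =>
      hxne (hSsep _ trivial _ trivial h)
    push_neg at this
    obtain ⟨n, hn⟩ := this
    have hVe1 : V (2 * n) = S n := by
      simp [hV, even_two_mul n, Nat.mul_div_cancel_left n two_pos]
    have hodd : ¬ Even (2 * n + 1) := by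
      simp [Nat.even_add_one, even_two_mul n]
    have hdiv : (2 * n + 1) / 2 = n := by omega
    have hVe2 : V (2 * n + 1) = (S n)ᶜ := by simp [hV, hodd, hdiv]
    rcases hn with ⟨hgx, hxS⟩ | ⟨hgx, hxS⟩
    · refine Set.mem_iUnion.2 ⟨2 * n + 1, ?_⟩
      simp [hC, hVe2, Set.mem_preimage, hxS, hgx]
    · refine Set.mem_iUnion.2 ⟨2 * n, ?_⟩
      simp [hC, hVe1, Set.mem_preimage, hxS, hgx]
  set E : ℕ → Set X := disjointed C with hE
  have hEm : ∀ n, MeasurableSet (E n) := MeasurableSet.disjointed hCm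
  have hEdisj : Pairwise (Function.onFun Disjoint E) := disjoint_disjointed C
  have hEU : ⋃ n, E n = ⋃ n, C n := iUnion_disjointed
  have hEg : ∀ n, E n ∩ actSet a g (E n) = ∅ := by
    intro n
    refine Set.eq_empty_of_subset_empty ?_
    calc E n ∩ actSet a g (E n)
        ⊆ C n ∩ actSet a g (C n) :=
          Set.inter_subset_inter (disjointed_subset C n)
            (Set.image_mono (disjointed_subset C n))
      _ = ∅ := hCdisj n
  have htot : ∑' n, μ (E n) ≠ ∞ := by
    rw [← measure_iUnion hEdisj hEm]
    exact measure_ne_top μ _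
  obtain ⟨N, hN⟩ :=
    ((ENNReal.tendsto_sum_nat_add (fun n => μ (E n)) htot).eventually_lt_const hε).exists
  refine ⟨N + 1, Fin.cons (⋃ m, ⋃ _ : m < N, E m)ᶜ (fun i : Fin N => E i), ?_, ?_⟩
  · refine ⟨?_, ?_, ?_⟩
    · intro i
      refine Fin.cases ?_ ?_ i
      · simp only [Fin.cons_zero]
        exact (MeasurableSet.iUnion fun m => MeasurableSet.iUnion fun _ => hEm m).compl
      · intro j; simp only [Fin.cons_succ]; exact hEm j
    · have hd0 : ∀ j' : Fin N, Disjoint ((⋃ m, ⋃ _ : m < N, E m)ᶜ) (E j'.1) :=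
        fun j' => disjoint_compl_left.mono_right
          (Set.subset_iUnion₂ (s := fun m (_ : m < N) => E m) j'.1 j'.2)
      intro i j hij
      induction i using Fin.cases with
      | zero =>
        induction j using Fin.cases with
        | zero => exact absurd rfl hij
        | succ j' =>
          simp only [Function.onFun, Fin.cons_zero, Fin.cons_succ]
          exact hd0 j'
      | succ i' =>
        induction j using Fin.cases with
        | zero =>
          simp only [Function.onFun, Fin.cons_zero, Fin.cons_succ]
          exact (hd0 i').symm
        | succ j' =>
          simp only [Function.onFun, Fin.cons_succ]
          refine hEdisj fun h : (i' : ℕ) = (j' : ℕ) => hij ?_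
          have : i' = j' := Fin.ext h
          rw [this]
    · refine Set.eq_univ_iff_forall.2 fun x => Set.mem_iUnion.2 ?_
      by_cases hx : ∃ m, m < N ∧ x ∈ E m
      · obtain ⟨m, hm, hxm⟩ := hx
        exact ⟨(⟨m, hm⟩ : Fin N).succ, by rw [Fin.cons_succ]; exact hxm⟩
      · push_neg at hx
        refine ⟨0, ?_⟩
        simp only [Fin.cons_zero, Set.mem_compl_iff, Set.mem_iUnion]
        rintro ⟨m, hm, hxm⟩
        exact hx m hm hxm
  · rw [Fin.sum_univ_succ]
    simp only [Fin.cons_zero, Fin.cons_succ]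
    have htail : ∀ i : Fin N, μ (E i.1 ∩ actSet a g (E i.1)) = 0 := by
      intro i; rw [hEg]; exact measure_empty
    rw [Finset.sum_congr rfl (fun i _ => htail i), Finset.sum_const, smul_zero, add_zero]
    have hsub : (⋃ m, ⋃ _ : m < N, E m)ᶜ ⊆ {x | a g x = x} ∪ ⋃ k, E (k + N) := by
      intro x hx
      by_cases hfix : a g x = x
      · exact Or.inl hfix
      · have : x ∈ ⋃ n, E n := hEU ▸ hcover hfix
        obtain ⟨m, hm⟩ := Set.mem_iUnion.1 this
        have hmN : N ≤ m := by
          by_contra h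
          exact hx (Set.mem_iUnion₂.2 ⟨m, by omega, hm⟩)
        exact Or.inr (Set.mem_iUnion.2 ⟨m - N, by rwa [Nat.sub_add_cancel hmN]⟩)
    calc μ ((⋃ m, ⋃ _ : m < N, E m)ᶜ ∩ actSet a g (⋃ m, ⋃ _ : m < N, E m)ᶜ)
        ≤ μ ({x | a g x = x} ∪ ⋃ k, E (k + N)) :=
          measure_mono ((Set.inter_subset_left).trans hsub)
      _ ≤ μ {x | a g x = x} + μ (⋃ k, E (k + N)) := measure_union_le _ _
      _ ≤ μ {x | a g x = x} + ε := by
          gcongr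
          exact (measure_iUnion_le _).trans hN.le

private lemma fix_le_of_wc {G : Type*} [Group G]
    {X : Type*} [MeasurableSpace X] [StandardBorelSpace X]
    (μ : Measure X) [IsProbabilityMeasure μ]
    {Y : Type*} [MeasurableSpace Y]
    (ν : Measure Y) [IsProbabilityMeasure ν]
    (a : G → X → X) (ha : IsPMP μ a) (b : G → Y → Y)
    (hab : WC μ a ν b) (g : G) :
    ν {y | b g y = y} ≤ μ {x | a g x = x} := by
  rw [← ENNReal.toReal_le_toReal (measure_ne_top ν _) (measure_ne_top μ _)]
  refine le_of_forall_pos_le_add fun ε hε => ?_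
  obtain ⟨k, P, hP, hPsum⟩ := exists_good_partition μ a ha g
    (ε := ENNReal.ofReal (ε / 2)) (ENNReal.ofReal_pos.2 (by linarith))
  obtain ⟨Q, hQ, hd⟩ := hab (ε / 2) (by linarith) {g} k P hP
  set mP : Fin k → ℝ := fun i => (μ (P i ∩ actSet a g (P i))).toReal with hmP
  set mQ : Fin k → ℝ := fun i => (ν (Q i ∩ actSet b g (Q i))).toReal with hmQ
  have hdiag : ∑ i, |mP i - mQ i| ≤ ε / 2 := by
    refine le_trans ?_ hd
    unfold statDist
    simp only [Finset.sum_singleton]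
    refine Finset.sum_le_sum fun i _ => ?_
    exact Finset.single_le_sum
      (f := fun j => |(μ (P i ∩ actSet a g (P j))).toReal -
        (ν (Q i ∩ actSet b g (Q j))).toReal|)
      (fun j _ => abs_nonneg _) (Finset.mem_univ i)
  have h1 : (ν {y | b g y = y}).toReal ≤ ∑ i, mQ i := by
    have hsub : {y | b g y = y} ⊆ ⋃ i, Q i ∩ actSet b g (Q i) := by
      intro y hy
      have : y ∈ ⋃ i, Q i := hQ.2.2 ▸ Set.mem_univ y
      obtain ⟨i, hi⟩ := Set.mem_iUnion.1 this
      exact Set.mem_iUnion.2 ⟨i, hi, ⟨y, hi, hy⟩⟩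
    have h2 : ν {y | b g y = y} ≤ ∑ i, ν (Q i ∩ actSet b g (Q i)) :=
      (measure_mono hsub).trans ((measure_iUnion_le _).trans_eq (tsum_fintype _))
    calc (ν {y | b g y = y}).toReal
        ≤ (∑ i, ν (Q i ∩ actSet b g (Q i))).toReal :=
          ENNReal.toReal_mono (by
            refine (lt_of_le_of_lt (Finset.sum_le_sum fun i _ => measure_mono
              (Set.subset_univ _)) ?_).ne
            simp [ENNReal.sum_lt_top]) h2
      _ = ∑ i, mQ i := ENNReal.toReal_sum fun i _ => measure_ne_top ν _
  have h3 : ∑ i, mP i ≤ (μ {x | a g x = x}).toReal + ε / 2 := by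
    rw [hmP, ← ENNReal.toReal_sum fun i _ => measure_ne_top μ _]
    have := ENNReal.toReal_mono (a := ∑ i, μ (P i ∩ actSet a g (P i)))
      (by exact (ENNReal.add_ne_top).2 ⟨measure_ne_top μ _, ENNReal.ofReal_ne_top⟩) hPsum
    rwa [ENNReal.toReal_add (measure_ne_top μ _) ENNReal.ofReal_ne_top,
      ENNReal.toReal_ofReal (by linarith)] at this
  have h4 : ∑ i, mQ i ≤ ∑ i, mP i + ε / 2 := by
    calc ∑ i, mQ i ≤ ∑ i, (mP i + |mP i - mQ i|) :=
          Finset.sum_le_sum fun i _ => by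
            have := neg_abs_le (mP i - mQ i); linarith
      _ = ∑ i, mP i + ∑ i, |mP i - mQ i| := Finset.sum_add_distrib
      _ ≤ ∑ i, mP i + ε / 2 := by linarith
  linarith

/-- If `a ≺ b` are pmp actions of a countable group on atomless
standard Borel probability spaces, then `|Fix_g(b)| ≤ |Fix_g(a)|` for every `g ∈ G`;
in particular weakly equivalent actions have the same measure of fixed-point sets, so
`g ↦ |Fix_g(·)|` is well defined on weak equivalence classes. -/
theorem fix_measure_antitone_of_wc {G : Type*} [Group G] [Countable G]
    {X : Type*} [MeasurableSpace X] [StandardBorelSpace X]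
    (μ : Measure X) [IsProbabilityMeasure μ] [NullSingletonClass μ]
    {Y : Type*} [MeasurableSpace Y] [StandardBorelSpace Y]
    (ν : Measure Y) [IsProbabilityMeasure ν] [NullSingletonClass ν]
    (a : G → X → X) (ha : IsPMP μ a) (b : G → Y → Y) (hb : IsPMP ν b)
    (hab : WC μ a ν b) :
    (∀ g : G, ν {y : Y | b g y = y} ≤ μ {x : X | a g x = x}) ∧
    (WC ν b μ a → ∀ g : G, ν {y : Y | b g y = y} = μ {x : X | a g x = x}) := by
    refine ⟨fun g => fix_le_of_wc μ ν a ha b hab g, fun hba g =>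
    le_antisymm (fix_le_of_wc μ ν a ha b hab g) (fix_le_of_wc ν μ b hb a hba g)⟩
end

section
/- Every pmp action a of a countable group G on an atomless probability space (X_a, μ_a) has a standard atomless factor: there exists a countably generated, G-invariant sub-σ-algebra F of the measurable sets of X_a such that the measure μ_a restricted to F is atomless. -/
open MeasureTheory Filter Topology
open scoped ENNReal symmDiff



section Aux
variable {X : Type*} [MeasurableSpace X] {μ : Measure X}

lemma diffuse_half_subset [IsFiniteMeasure μ] (hd : Diffuse μ) {A : Set X} (hA : MeasurableSet A)
    (h0 : μ A ≠ 0) : ∃ B, MeasurableSet B ∧ B ⊆ A ∧ 0 < μ B ∧ 2 * μ B ≤ μ A := by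
  obtain ⟨B, hBm, hBA, hB0, hBlt⟩ := hd A hA h0
  by_cases h : 2 * μ B ≤ μ A
  · exact ⟨B, hBm, hBA, hB0, h⟩
  · push_neg at h
    have hdiff : μ (A \ B) = μ A - μ B :=
      measure_diff hBA hBm.nullMeasurableSet (measure_ne_top μ B)
    have h1 : μ A - μ B ≤ μ B := by
      rw [tsub_le_iff_right, ← two_mul]; exact h.le
    refine ⟨A \ B, hA.diff hBm, Set.diff_subset, ?_, ?_⟩
    · rw [hdiff]; exact tsub_pos_iff_lt.mpr hBlt
    · rw [hdiff, two_mul]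
      calc (μ A - μ B) + (μ A - μ B) ≤ (μ A - μ B) + μ B := add_le_add_right h1 _
        _ = μ A := tsub_add_cancel_of_le hBlt.le

lemma diffuse_small_subset [IsProbabilityMeasure μ] (hd : Diffuse μ) {A : Set X}
    (hA : MeasurableSet A) (h0 : μ A ≠ 0) {ε : ℝ≥0∞} (hε : ε ≠ 0) :
    ∃ B, MeasurableSet B ∧ B ⊆ A ∧ 0 < μ B ∧ μ B ≤ ε := by
  have key : ∀ n : ℕ, ∃ B, MeasurableSet B ∧ B ⊆ A ∧ 0 < μ B ∧ μ B ≤ 2⁻¹ ^ n := by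
    intro n
    induction n with
    | zero => exact ⟨A, hA, subset_rfl, pos_iff_ne_zero.mpr h0, by simpa using prob_le_one⟩
    | succ n ih =>
      obtain ⟨B, hBm, hBA, hB0, hBle⟩ := ih
      obtain ⟨B', hB'm, hB'B, hB'0, hB'le⟩ := diffuse_half_subset hd hBm hB0.ne'
      refine ⟨B', hB'm, hB'B.trans hBA, hB'0, ?_⟩
      have : μ B' ≤ 2⁻¹ * μ B := by
        rw [← ENNReal.mul_le_mul_iff_right (a := 2) two_ne_zero (by norm_num), ← mul_assoc]
        have h2 : (2 : ℝ≥0∞) * 2⁻¹ = 1 := ENNReal.mul_inv_cancel two_ne_zero (by norm_num)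
        rw [h2, one_mul]
        exact hB'le
      calc μ B' ≤ 2⁻¹ * μ B := this
        _ ≤ 2⁻¹ * 2⁻¹ ^ n := mul_le_mul_right hBle _
        _ = 2⁻¹ ^ (n + 1) := by ring
  obtain ⟨n, hn⟩ := ENNReal.exists_inv_two_pow_lt hε
  obtain ⟨B, h1, h2, h3, h4⟩ := key n
  exact ⟨B, h1, h2, h3, h4.trans hn.le⟩

end Aux

section ActAux
variable {G : Type*} [Group G] {X : Type*} {mX : MeasurableSpace X}
  {μ : Measure X} {a : G → X → X}

lemma actSet_eq_preimage (ha : IsPMP μ a) (g : G) (A : Set X) :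
    actSet a g A = a g⁻¹ ⁻¹' A := by
  ext x
  constructor
  · rintro ⟨y, hy, rfl⟩
    have : a g⁻¹ (a g y) = y := by
      rw [← ha.2.2, inv_mul_cancel, ha.2.1]
    simpa [Set.mem_preimage, this]
  · intro hx
    refine ⟨a g⁻¹ x, hx, ?_⟩
    rw [← ha.2.2, mul_inv_cancel, ha.2.1]

lemma actSet_one (ha : IsPMP μ a) (A : Set X) : actSet a 1 A = A := by
  rw [actSet_eq_preimage ha, inv_one]
  ext x; simp [ha.2.1 x]

end ActAux

section CoverAux
variable {X : Type*} [MeasurableSpace X] {μ : Measure X}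

lemma diffuse_small_cover [IsProbabilityMeasure μ] (hd : Diffuse μ) {ε : ℝ≥0∞} (hε : ε ≠ 0) :
    ∃ C : ℕ → Set X, (∀ n, MeasurableSet (C n)) ∧ (∀ n, μ (C n) ≤ ε) ∧
      (⋃ n, C n) = Set.univ := by
  by_cases hεtop : ε = ∞
  · exact ⟨fun _ => Set.univ, fun _ => MeasurableSet.univ, fun _ => by simp [hεtop],
      Set.iUnion_const _⟩
  -- the greedy sup functional
  set s : Set X → ℝ≥0∞ :=
    fun R => ⨆ (B : Set X) (_ : MeasurableSet B ∧ B ⊆ R ∧ μ B ≤ ε), μ B with hs_def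
  have hs_le : ∀ R, s R ≤ ε := fun R => iSup₂_le fun B hB => hB.2.2
  have hs_mem : ∀ R B, MeasurableSet B → B ⊆ R → μ B ≤ ε → μ B ≤ s R := by
    intro R B h1 h2 h3
    exact le_iSup₂ (f := fun (B : Set X) (_ : MeasurableSet B ∧ B ⊆ R ∧ μ B ≤ ε) => μ B)
      B ⟨h1, h2, h3⟩
  have hchoice : ∀ R : Set X, ∃ B, MeasurableSet B ∧ B ⊆ R ∧ μ B ≤ ε ∧ s R ≤ 2 * μ B := by
    intro R
    by_cases h0 : s R = 0
    · exact ⟨∅, MeasurableSet.empty, Set.empty_subset R, by simp, by simp [h0]⟩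
    · have hlt : s R / 2 < s R :=
        ENNReal.half_lt_self h0 (lt_of_le_of_lt (hs_le R) (lt_top_iff_ne_top.mpr hεtop)).ne
      rw [hs_def] at hlt
      obtain ⟨B, hB⟩ := lt_iSup_iff.mp hlt
      obtain ⟨hBP, hBlt⟩ := lt_iSup_iff.mp hB
      refine ⟨B, hBP.1, hBP.2.1, hBP.2.2, ?_⟩
      calc s R = 2 * (s R / 2) := by
            rw [ENNReal.mul_div_cancel two_ne_zero (by norm_num)]
        _ ≤ 2 * μ B := mul_le_mul_right hBlt.le _
  choose f hfm hfsub hfle hfs using hchoice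
  -- the greedy sequence of remainders
  let R : ℕ → Set X := fun n => Nat.rec Set.univ (fun _ Rn => Rn \ f Rn) n
  have hR0 : R 0 = Set.univ := rfl
  have hRsucc : ∀ n, R (n + 1) = R n \ f (R n) := fun n => rfl
  have hRm : ∀ n, MeasurableSet (R n) := by
    intro n; induction n with
    | zero => exact MeasurableSet.univ
    | succ n ih => exact ih.diff (hfm _)
  have hRanti : ∀ m n, m ≤ n → R n ⊆ R m := by
    intro m n h
    induction n with
    | zero => simp_all
    | succ n ih =>
      rcases Nat.lt_or_ge m (n+1) with h' | h'
      · exact (Set.diff_subset).trans (ih (Nat.lt_succ_iff.mp h'))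
      · have : m = n + 1 := le_antisymm h h'
        subst this; exact subset_rfl
  -- disjointness of the chosen pieces
  have hdisj : Pairwise (Function.onFun Disjoint (fun n => f (R n))) := by
    have key : ∀ m n, m < n → Disjoint (f (R m)) (f (R n)) := by
      intro m n hmn
      have h1 : f (R n) ⊆ R n := hfsub _
      have h2 : R n ⊆ R (m + 1) := hRanti _ _ hmn
      have h3 : R (m + 1) = R m \ f (R m) := hRsucc m
      refine Set.disjoint_left.mpr fun x hx hx' => ?_
      have := h2 (h1 hx')
      rw [h3] at this
      exact this.2 hx
    intro m n hmn
    rcases Nat.lt_or_ge m n with h | h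
    · exact key m n h
    · exact (key n m (lt_of_le_of_ne h (Ne.symm hmn))).symm
  have hsum : ∑' n, μ (f (R n)) ≤ 1 := by
    rw [← measure_iUnion hdisj (fun n => hfm _)]
    exact prob_le_one
  -- the residual intersection is null
  have hres : μ (⋂ n, R n) = 0 := by
    by_contra h0
    obtain ⟨B, hBm, hBsub, hB0, hBle⟩ :=
      diffuse_small_subset hd (MeasurableSet.iInter hRm) h0 hε
    have hBs : ∀ n, μ B ≤ 2 * μ (f (R n)) := by
      intro n
      exact (hs_mem (R n) B hBm ((Set.iInter_subset _ n).trans' hBsub |>.trans (le_refl _) |> fun h => h) hBle).trans (hfs _)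
    have : (∑' _ : ℕ, μ B) ≤ ∑' n, 2 * μ (f (R n)) := ENNReal.tsum_le_tsum hBs
    rw [ENNReal.tsum_const_eq_top_of_ne_zero hB0.ne', ENNReal.tsum_mul_left] at this
    have h2 : (2 : ℝ≥0∞) * ∑' n, μ (f (R n)) ≤ 2 * 1 := mul_le_mul_right hsum _
    rw [mul_one] at h2
    exact absurd (this.trans h2) (by simp)
  -- assemble the cover
  refine ⟨fun n => Nat.rec (⋂ n, R n) (fun m _ => f (R m)) n, ?_, ?_, ?_⟩
  · rintro (_ | n)
    · exact MeasurableSet.iInter hRm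
    · exact hfm _
  · rintro (_ | n)
    · simp [hres]
    · exact hfle _
  · refine Set.eq_univ_of_forall fun x => ?_
    rcases Classical.em (∀ n, x ∈ R n) with hx | hx
    · exact Set.mem_iUnion.mpr ⟨0, Set.mem_iInter.mpr hx⟩
    · have hex : ∃ n, x ∉ R n := not_forall.mp hx
      haveI : DecidablePred fun n => x ∉ R n := Classical.decPred _
      set n := Nat.find hex with hn
      have hxn : x ∉ R n := Nat.find_spec hex
      have hn0 : n ≠ 0 := by
        intro h; rw [h, hR0] at hxn; exact hxn (Set.mem_univ x)
      obtain ⟨m, hm⟩ := Nat.exists_eq_succ_of_ne_zero hn0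
      have hxm : x ∈ R m := by
        refine Classical.byContradiction fun h => ?_
        have hle : n ≤ m := Nat.find_le h
        omega
      have : x ∈ f (R m) := by
        by_contra h
        rw [hm] at hxn
        exact hxn ⟨hxm, h⟩
      exact Set.mem_iUnion.mpr ⟨m + 1, this⟩

end CoverAux

/-- Every pmp action of a countable group on an atomless probability
space has a standard atomless factor: a countably generated `G`-invariant
sub-σ-algebra on which the measure is still atomless. -/
theorem exists_standard_diffuse_factor {G : Type*} [Group G] [Countable G]
    {X : Type*} [m0 : MeasurableSpace X]
    (μ : Measure X) [IsProbabilityMeasure μ]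
    (a : G → X → X) (ha : IsPMP μ a) (hd : Diffuse μ) :
    ∃ m : MeasurableSpace X, m ≤ m0 ∧
      (∃ S : Set (Set X), S.Countable ∧ m = MeasurableSpace.generateFrom S) ∧
      (∀ (g : G) (A : Set X), MeasurableSet[m] A → MeasurableSet[m] (actSet a g A)) ∧
      DiffuseOn m μ := by
  -- choose, for each k, a countable cover by sets of measure ≤ 2⁻¹ ^ k
  have hcov : ∀ k : ℕ, ∃ C : ℕ → Set X, (∀ n, MeasurableSet (C n)) ∧
      (∀ n, μ (C n) ≤ 2⁻¹ ^ k) ∧ (⋃ n, C n) = Set.univ := fun k =>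
    diffuse_small_cover hd (pow_ne_zero k (ENNReal.inv_ne_zero.mpr (by norm_num)))
  choose C hCm hCle hCun using hcov
  -- the generating family: all group translates of all cover pieces
  set S : Set (Set X) := Set.range (fun p : G × ℕ × ℕ => actSet a p.1 (C p.2.1 p.2.2))
    with hS_def
  have hSm : ∀ s ∈ S, MeasurableSet[MeasurableSpace.generateFrom S] s :=
    fun s hs => MeasurableSpace.measurableSet_generateFrom hs
  have hCmem : ∀ k n, MeasurableSet[MeasurableSpace.generateFrom S] (C k n) := by
    intro k n
    have : C k n = actSet a (1 : G) (C k n) := (actSet_one ha _).symm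
    rw [this]
    exact hSm _ ⟨⟨1, k, n⟩, rfl⟩
  refine ⟨MeasurableSpace.generateFrom S, ?_, ⟨S, Set.countable_range _, rfl⟩, ?_, ?_⟩
  · -- m ≤ m0
    refine MeasurableSpace.generateFrom_le fun s hs => ?_
    obtain ⟨⟨g, k, n⟩, rfl⟩ := hs
    simp only []
    rw [actSet_eq_preimage ha]
    exact (ha.1 g⁻¹).measurable (hCm k n)
  · -- G-invariance
    intro g A hA
    have hmeas : Measurable[MeasurableSpace.generateFrom S, MeasurableSpace.generateFrom S]
        (a g⁻¹) := by
      refine @measurable_generateFrom X X (MeasurableSpace.generateFrom S) S (a g⁻¹)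
        (fun s hs => ?_)
      obtain ⟨⟨h, k, n⟩, rfl⟩ := hs
      have : a g⁻¹ ⁻¹' actSet a h (C k n) = actSet a (g * h) (C k n) := by
        rw [actSet_eq_preimage ha, actSet_eq_preimage ha, ← Set.preimage_comp]
        ext x
        simp only [Set.mem_preimage, Function.comp_apply]
        rw [← ha.2.2, mul_inv_rev]
      rw [this]
      exact hSm _ ⟨⟨g * h, k, n⟩, rfl⟩
    rw [actSet_eq_preimage ha]
    exact hmeas hA
  · -- diffuseness on m
    intro A hA hA0
    obtain ⟨k, hk⟩ := ENNReal.exists_inv_two_pow_lt hA0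
    have hcover : A = ⋃ n, A ∩ C k n := by
      rw [← Set.inter_iUnion, hCun k, Set.inter_univ]
    have hex : ∃ n, μ (A ∩ C k n) ≠ 0 := by
      by_contra h
      push_neg at h
      apply hA0
      have hle : μ A ≤ 0 := by
        calc μ A = μ (⋃ n, A ∩ C k n) := by rw [← hcover]
          _ ≤ ∑' n, μ (A ∩ C k n) := measure_iUnion_le _
          _ = 0 := by simp [h]
      exact le_antisymm hle zero_le
    obtain ⟨n, hn⟩ := hex
    refine ⟨A ∩ C k n, hA.inter (hCmem k n), Set.inter_subset_left, pos_iff_ne_zero.mpr hn, ?_⟩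
    calc μ (A ∩ C k n) ≤ μ (C k n) := measure_mono Set.inter_subset_right
      _ ≤ 2⁻¹ ^ k := hCle k n
      _ < μ A := hk
end
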